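/- arXiv:2112.15102 — 10 statements merged into one kernel-verified Lean document; each statement's English description precedes it below -/
import Mathlib

section
/- Let d ≥ 1, N ≥ 1 be integers, h > 0, p > 0, and X₀ ∈ ℝ^d. For each n ∈ {0,…,N−1} let P_n and Q_n be Markov kernels from ℝ^d to ℝ^d (the exact and the numerical one-step transition kernels). Let u : {0,…,N} × ℝ^d → ℝ be measurable, ν : ℝ^d → [0,∞) be Borel measurable, and Υ ≥ 0, and define the numerical laws μ₀ = δ_{X₀} (Dirac mass at X₀) and μ_{n+1} = μ_n.bind Q_n for n < N. Assume: (i) (Markov/flow property) for every n < N and every x ∈ ℝ^d, u(n+1,·) is integrable with respect to the measure P_n(x) and u(n,x) = ∫ u(n+1,y) P_n(x)(dy); (ii) (one-step weak error) for every n < N and every x ∈ ℝ^d, u(n+1,·) is integrable with respect to Q_n(x) and |∫ u(n+1,y) P_n(x)(dy) − ∫ u(n+1,y) Q_n(x)(dy)| ≤ ν(x) h^{p+1}; (iii) for every n < N, ν is μ_n-integrable with ∫ ν dμ_n ≤ Υ, and u(n+1,·) is integrable with respect to both μ_n.bind P_n and μ_{n+1}. Then |u(0, X₀) − ∫ u(N,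 y) μ_N(dy)| ≤ Υ · N · h^{p+1}. -/
open MeasureTheory ProbabilityTheory

section Aux

variable {α β : Type*} [MeasurableSpace α] [MeasurableSpace β]

lemma bind_eq_map_snd (μ : Measure α) [SFinite μ] (κ : Kernel α β) [IsSFiniteKernel κ] :
    μ.bind (fun x => κ x) = (μ ⊗ₘ κ).map Prod.snd := by
  ext s hs
  rw [Measure.map_apply measurable_snd hs, Measure.compProd_apply (measurable_snd hs),
    Measure.bind_apply hs (Kernel.measurable κ).aemeasurable]
  rfl

lemma integral_bind_eq (μ : Measure α) [SFinite μ] (κ : Kernel α β) [IsSFiniteKernel κ]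
    (f : β → ℝ) (hf : Measurable f) (hint : Integrable f (μ.bind (fun x => κ x))) :
    (∫ y, f y ∂(μ.bind (fun x => κ x)) = ∫ x, ∫ y, f y ∂(κ x) ∂μ) ∧
      Integrable (fun x => ∫ y, f y ∂(κ x)) μ := by
  have hmap := bind_eq_map_snd μ κ
  rw [hmap] at hint
  have hint' : Integrable (fun z : α × β => f z.2) (μ ⊗ₘ κ) :=
    (integrable_map_measure hf.aestronglyMeasurable measurable_snd.aemeasurable).mp hint
  constructor
  · rw [hmap, integral_map measurable_snd.aemeasurable hf.aestronglyMeasurable,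
      Measure.integral_compProd hint']
  · have hnorm : Integrable (fun x => ∫ y, ‖f y‖ ∂(κ x)) μ :=
      ((Measure.integrable_compProd_iff hint'.aestronglyMeasurable).mp hint').2
    have hsm : StronglyMeasurable fun x : α => ∫ y, f y ∂(κ x) := by
      have : StronglyMeasurable (Function.uncurry fun (_ : α) (y : β) => f y) :=
        (hf.comp measurable_snd).stronglyMeasurable
      exact this.integral_kernel_prod_right
    refine hnorm.mono' hsm.aestronglyMeasurable ?_
    filter_upwards with x
    exact norm_integral_le_integral_norm _

end Aux

/-- The general weak convergence theorem for one-step approximations,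
in abstract Markov-kernel form. -/
theorem general_weak_convergence_theorem
    (d N : ℕ) (hd : 1 ≤ d) (hN : 1 ≤ N) (h p : ℝ) (hh : 0 < h) (hp : 0 < p)
    (X₀ : EuclideanSpace ℝ (Fin d))
    (P Q : ℕ → Kernel (EuclideanSpace ℝ (Fin d)) (EuclideanSpace ℝ (Fin d)))
    (hP : ∀ n, IsMarkovKernel (P n)) (hQ : ∀ n, IsMarkovKernel (Q n))
    (u : ℕ → EuclideanSpace ℝ (Fin d) → ℝ) (hu : ∀ n, Measurable (u n))
    (ν : EuclideanSpace ℝ (Fin d) → ℝ) (hνmeas : Measurable ν) (hν0 : ∀ x, 0 ≤ ν x)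
    (Υ : ℝ) (hΥ : 0 ≤ Υ)
    (μ : ℕ → Measure (EuclideanSpace ℝ (Fin d)))
    (hμ0 : μ 0 = Measure.dirac X₀)
    (hμs : ∀ n < N, μ (n + 1) = (μ n).bind (fun x => Q n x))
    -- (i) Markov/flow property
    (hflow_int : ∀ n < N, ∀ x, Integrable (u (n + 1)) (P n x))
    (hflow : ∀ n < N, ∀ x, u n x = ∫ y, u (n + 1) y ∂(P n x))
    -- (ii) one-step weak error
    (hloc_int : ∀ n < N, ∀ x, Integrable (u (n + 1)) (Q n x))
    (hloc : ∀ n < N, ∀ x,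
      |(∫ y, u (n + 1) y ∂(P n x)) - ∫ y, u (n + 1) y ∂(Q n x)| ≤ ν x * h ^ (p + 1))
    -- (iii) integrability along the numerical laws
    (hν_int : ∀ n < N, Integrable ν (μ n))
    (hν_bound : ∀ n < N, (∫ x, ν x ∂(μ n)) ≤ Υ)
    (hint_P : ∀ n < N, Integrable (u (n + 1)) ((μ n).bind (fun x => P n x)))
    (hint : ∀ n < N, Integrable (u (n + 1)) (μ (n + 1))) :
    |u 0 X₀ - ∫ y, u N y ∂(μ N)| ≤ Υ * N * h ^ (p + 1) := by
  -- each μ n (n ≤ N) is a probability measure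
  have hprob : ∀ n ≤ N, IsProbabilityMeasure (μ n) := by
    intro n hn
    induction n with
    | zero => rw [hμ0]; infer_instance
    | succ k ih =>
      have hk : k < N := hn
      have : IsProbabilityMeasure (μ k) := ih (le_of_lt hk)
      rw [hμs k hk, bind_eq_map_snd (μ k) (Q k)]
      exact Measure.isProbabilityMeasure_map measurable_snd.aemeasurable
  -- main induction
  have key : ∀ n ≤ N, |u 0 X₀ - ∫ y, u n y ∂(μ n)| ≤ Υ * n * h ^ (p + 1) := by
    intro n hn
    induction n with
    | zero =>
      rw [hμ0, integral_dirac' _ _ (hu 0).stronglyMeasurable]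
      simp
    | succ k ih =>
      have hk : k < N := hn
      have hkle : k ≤ N := le_of_lt hk
      have ihk := ih hkle
      haveI := hprob k hkle
      -- one-step estimate
      have hstep : |(∫ y, u k y ∂(μ k)) - ∫ y, u (k + 1) y ∂(μ (k + 1))| ≤ Υ * h ^ (p + 1) := by
        have hPB := integral_bind_eq (μ k) (P k) (u (k + 1)) (hu (k + 1)) (hint_P k hk)
        have hQint : Integrable (u (k + 1)) ((μ k).bind fun x => Q k x) := by
          rw [← hμs k hk]; exact hint k hk
        have hQB := integral_bind_eq (μ k) (Q k) (u (k + 1)) (hu (k + 1)) hQint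
        have e1 : ∫ y, u k y ∂(μ k) = ∫ x, ∫ y, u (k + 1) y ∂(P k x) ∂(μ k) :=
          integral_congr_ae (Filter.Eventually.of_forall fun x => hflow k hk x)
        have e2 : ∫ y, u (k + 1) y ∂(μ (k + 1)) = ∫ x, ∫ y, u (k + 1) y ∂(Q k x) ∂(μ k) := by
          rw [hμs k hk]; exact hQB.1
        rw [e1, e2, ← integral_sub hPB.2 hQB.2]
        have habs : |∫ x, ((∫ y, u (k + 1) y ∂(P k x)) - ∫ y, u (k + 1) y ∂(Q k x)) ∂(μ k)|
            ≤ ∫ x, |(∫ y, u (k + 1) y ∂(P k x)) - ∫ y, u (k + 1) y ∂(Q k x)| ∂(μ k) := by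
          simpa [Real.norm_eq_abs] using norm_integral_le_integral_norm
            (μ := μ k) (fun x => (∫ y, u (k + 1) y ∂(P k x)) - ∫ y, u (k + 1) y ∂(Q k x))
        calc |∫ x, ((∫ y, u (k + 1) y ∂(P k x)) - ∫ y, u (k + 1) y ∂(Q k x)) ∂(μ k)|
            ≤ ∫ x, |(∫ y, u (k + 1) y ∂(P k x)) - ∫ y, u (k + 1) y ∂(Q k x)| ∂(μ k) :=
              habs
          _ ≤ ∫ x, ν x * h ^ (p + 1) ∂(μ k) := by
              refine integral_mono_of_nonneg
                (Filter.Eventually.of_forall fun x => abs_nonneg _)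
                ((hν_int k hk).mul_const _)
                (Filter.Eventually.of_forall fun x => hloc k hk x)
          _ = (∫ x, ν x ∂(μ k)) * h ^ (p + 1) := by rw [integral_mul_const]
          _ ≤ Υ * h ^ (p + 1) := by
              have := hν_bound k hk
              exact mul_le_mul_of_nonneg_right this (le_of_lt (Real.rpow_pos_of_pos hh _))
      calc |u 0 X₀ - ∫ y, u (k + 1) y ∂(μ (k + 1))|
          ≤ |u 0 X₀ - ∫ y, u k y ∂(μ k)| +
            |(∫ y, u k y ∂(μ k)) - ∫ y, u (k + 1) y ∂(μ (k + 1))| := abs_sub_le _ _ _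
        _ ≤ Υ * k * h ^ (p + 1) + Υ * h ^ (p + 1) := add_le_add ihk hstep
        _ = Υ * (k + 1 : ℕ) * h ^ (p + 1) := by push_cast; ring
  exact key N le_rfl
end

section
/- Let d, m ≥ 1, let f : ℝ^d → ℝ^d and g : ℝ^d → ℝ^{d×m} be continuously differentiable, and let λ₀ > 0 and C ∈ ℝ be such that ⟨Df(x)y, y⟩ + λ₀ ‖Dg(x)y‖² ≤ C|y|² for all x, y ∈ ℝ^d, where Df(x) is the Jacobian matrix of f at x and Dg(x)y ∈ ℝ^{d×m} denotes the directional derivative of g at x in the direction y. Then for all x, y ∈ ℝ^d, ⟨x−y, f(x)−f(y)⟩ + λ₀ ‖g(x)−g(y)‖² ≤ C|x−y|². -/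
open scoped RealInnerProductSpace

/-- The infinitesimal monotonicity condition (A3) on the derivatives of the drift `f`
and the diffusion `g` implies the global one-sided Lipschitz/monotonicity condition.
Here `ℝ^{d×m}` is modelled as `EuclideanSpace ℝ (Fin d × Fin m)`, whose norm is the
Frobenius norm. -/
theorem one_sided_lipschitz_of_derivative_monotonicity
    (d m : ℕ) (hd : 1 ≤ d) (hm : 1 ≤ m)
    (f : EuclideanSpace ℝ (Fin d) → EuclideanSpace ℝ (Fin d))
    (g : EuclideanSpace ℝ (Fin d) → EuclideanSpace ℝ (Fin d × Fin m))
    (hf : ContDiff ℝ 1 f) (hg : ContDiff ℝ 1 g)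
    (lam C : ℝ) (hlam : 0 < lam)
    (hmono : ∀ x y : EuclideanSpace ℝ (Fin d),
      ⟪fderiv ℝ f x y, y⟫ + lam * ‖fderiv ℝ g x y‖ ^ 2 ≤ C * ‖y‖ ^ 2) :
    ∀ x y : EuclideanSpace ℝ (Fin d),
      ⟪x - y, f x - f y⟫ + lam * ‖g x - g y‖ ^ 2 ≤ C * ‖x - y‖ ^ 2 := by
  intro x y
  set v := x - y with hv
  have hline : ∀ t : ℝ, HasDerivAt (fun s : ℝ => y + s • v) v t := by
    intro t
    simpa using ((hasDerivAt_id t).smul_const v).const_add y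
  have hx1 : y + (1:ℝ) • v = x := by simp [hv]
  have hy0 : y + (0:ℝ) • v = y := by simp
  have hcl : Continuous fun t : ℝ => y + t • v := by continuity
  set A : ℝ → ℝ := fun t => ⟪fderiv ℝ f (y + t • v) v, v⟫ with hA
  set B : ℝ → ℝ := fun t => ‖fderiv ℝ g (y + t • v) v‖ with hB
  have hAcont : Continuous A := by
    exact (((hf.continuous_fderiv one_ne_zero).comp hcl).clm_apply continuous_const).inner continuous_const
  have hBcont : Continuous B := by
    exact (((hg.continuous_fderiv one_ne_zero).comp hcl).clm_apply continuous_const).norm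
  -- FTC for f-term
  have hfd : ∀ t : ℝ, HasDerivAt (fun s : ℝ => ⟪f (y + s • v), v⟫) (A t) t := by
    intro t
    have h1 : HasDerivAt (fun s : ℝ => f (y + s • v)) (fderiv ℝ f (y + t • v) v) t :=
      (hf.differentiable one_ne_zero (y + t • v)).hasFDerivAt.comp_hasDerivAt t (hline t)
    simpa [hA] using h1.inner ℝ (hasDerivAt_const t v)
  have keyf : ∫ t in (0:ℝ)..1, A t = ⟪x - y, f x - f y⟫ := by
    rw [intervalIntegral.integral_eq_sub_of_hasDerivAt (fun t _ => hfd t)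
      (hAcont.intervalIntegrable 0 1)]
    simp only [hx1, hy0]
    rw [← inner_sub_left, real_inner_comm, hv]
  -- FTC for g-term
  have hgd : ∀ t : ℝ, HasDerivAt (fun s : ℝ => g (y + s • v)) (fderiv ℝ g (y + t • v) v) t :=
    fun t => (hg.differentiable one_ne_zero (y + t • v)).hasFDerivAt.comp_hasDerivAt t (hline t)
  have keyg : g x - g y = ∫ t in (0:ℝ)..1, fderiv ℝ g (y + t • v) v := by
    rw [intervalIntegral.integral_eq_sub_of_hasDerivAt (fun t _ => hgd t)
      ((((hg.continuous_fderiv one_ne_zero).comp hcl).clm_apply continuous_const).intervalIntegrable 0 1)]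
    simp [hv]
  have hBint : IntervalIntegrable B MeasureTheory.volume 0 1 := hBcont.intervalIntegrable 0 1
  have hB2int : IntervalIntegrable (fun t => B t ^ 2) MeasureTheory.volume 0 1 :=
    (hBcont.pow 2).intervalIntegrable 0 1
  set I1 : ℝ := ∫ t in (0:ℝ)..1, B t with hI1
  set I2 : ℝ := ∫ t in (0:ℝ)..1, B t ^ 2 with hI2
  have hgnorm : ‖g x - g y‖ ≤ I1 := by
    rw [keyg, hI1]
    exact intervalIntegral.norm_integral_le_integral_norm (by norm_num)
  have hI1nn : 0 ≤ I1 :=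
    intervalIntegral.integral_nonneg (by norm_num) (fun t _ => norm_nonneg _)
  have hCS : I1 ^ 2 ≤ I2 := by
    have h0 : 0 ≤ ∫ t in (0:ℝ)..1, (B t - I1) ^ 2 :=
      intervalIntegral.integral_nonneg (by norm_num) (fun t _ => sq_nonneg _)
    have hexp : ∫ t in (0:ℝ)..1, (B t - I1) ^ 2 = I2 - I1 ^ 2 := by
      have heq : ∀ t : ℝ, (B t - I1) ^ 2 = (B t ^ 2 - (2 * I1) * B t) + I1 ^ 2 := by
        intro t; ring
      simp_rw [heq]
      rw [intervalIntegral.integral_add (hB2int.sub (hBint.const_mul _))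
        intervalIntegrable_const,
        intervalIntegral.integral_sub hB2int (hBint.const_mul _),
        intervalIntegral.integral_const_mul, intervalIntegral.integral_const]
      rw [← hI1, ← hI2]
      simp; ring
    linarith
  have hgsq : lam * ‖g x - g y‖ ^ 2 ≤ lam * I2 := by
    have : ‖g x - g y‖ ^ 2 ≤ I1 ^ 2 := by
      apply pow_le_pow_left₀ (norm_nonneg _) hgnorm
    nlinarith
  have hAint : IntervalIntegrable A MeasureTheory.volume 0 1 := hAcont.intervalIntegrable 0 1
  have hsum : (∫ t in (0:ℝ)..1, A t) + lam * I2 = ∫ t in (0:ℝ)..1, (A t + lam * B t ^ 2) := by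
    rw [intervalIntegral.integral_add hAint (hB2int.const_mul _),
      intervalIntegral.integral_const_mul, hI2]
  have hbound : ∫ t in (0:ℝ)..1, (A t + lam * B t ^ 2) ≤ ∫ t in (0:ℝ)..1, C * ‖v‖ ^ 2 := by
    apply intervalIntegral.integral_mono_on (by norm_num)
      (hAint.add (hB2int.const_mul _)) intervalIntegrable_const
    intro t _
    exact hmono (y + t • v) v
  have hconst : ∫ t in (0:ℝ)..1, C * ‖v‖ ^ 2 = C * ‖v‖ ^ 2 := by simp
  calc ⟪x - y, f x - f y⟫ + lam * ‖g x - g y‖ ^ 2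
      ≤ ⟪x - y, f x - f y⟫ + lam * I2 := by linarith
    _ = (∫ t in (0:ℝ)..1, A t) + lam * I2 := by rw [keyf]
    _ = ∫ t in (0:ℝ)..1, (A t + lam * B t ^ 2) := hsum
    _ ≤ ∫ t in (0:ℝ)..1, C * ‖v‖ ^ 2 := hbound
    _ = C * ‖x - y‖ ^ 2 := by rw [hconst, hv]
end

section
/- Let d, m ≥ 1, L > 0, r ≥ 0, 0 ≤ ρ ≤ r, and suppose f : ℝ^d → ℝ^d satisfies |f(x)| ≤ L(1+|x|^{2r+1}) and g : ℝ^d → ℝ^{d×m} satisfies ‖g(x)‖ ≤ L(1+|x|^ρ) for all x ∈ ℝ^d. Let 0 < α₁, α₂ ≤ 1/2 and set α = min(α₁,α₂). Then there exists a constant C depending only on L, r and ρ such that for all h ∈ (0,1] and all x ∈ ℝ^d, the fully tamed Euler (FTE1) coefficients satisfy |f̄_h(x) − f(x)| ≤ C h^{α}(1+|x|^{4r+2}) and ‖ḡ_h(x) − g(x)‖ ≤ C h^{α}(1+|x|^{2r+ρ+1}). -/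
private lemma rpow_le_one_add_rpow {X a b : ℝ} (hX : 0 ≤ X) (ha : 0 ≤ a) (hab : a ≤ b) :
    X ^ a ≤ 1 + X ^ b := by
  rcases le_total X 1 with hX1 | hX1
  · have h1 := Real.rpow_le_one hX hX1 ha
    have h2 := Real.rpow_nonneg hX b
    linarith
  · have h1 := Real.rpow_le_rpow_of_exponent_le hX1 hab
    have h2 := Real.rpow_nonneg hX a
    linarith

private lemma fte1_sum_bound {L P Q F G : ℝ} (hL : 0 < L) (hP0 : 0 ≤ P) (hQ0 : 0 ≤ Q)
    (hG0 : 0 ≤ G) (hF : F ≤ L * (1 + P)) (hG : G ≤ L * (1 + Q))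
    (hQsqP : Q ^ 2 ≤ 1 + P) (hQP : Q ≤ 1 + P) :
    F + G ^ 2 ≤ (L + 8 * L ^ 2) * (1 + P) := by
  have hQsq' : (1 + Q) ^ 2 ≤ 4 + 3 * P := by nlinarith
  have hG2 : G ^ 2 ≤ L ^ 2 * (4 + 3 * P) := by
    calc G ^ 2 ≤ (L * (1 + Q)) ^ 2 := by nlinarith
      _ = L ^ 2 * (1 + Q) ^ 2 := by ring
      _ ≤ L ^ 2 * (4 + 3 * P) := by nlinarith [sq_nonneg L]
  nlinarith [sq_nonneg L, mul_pos hL hL]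

private lemma fte1_f_bound {L P Q Y F G : ℝ} (hL : 0 < L) (hP0 : 0 ≤ P) (hQ0 : 0 ≤ Q)
    (hY0 : 0 ≤ Y) (hF0 : 0 ≤ F) (hG0 : 0 ≤ G)
    (hF : F ≤ L * (1 + P)) (hG : G ≤ L * (1 + Q))
    (hPsq : P ^ 2 = Y) (hQsqP : Q ^ 2 ≤ 1 + P) (hQP : Q ≤ 1 + P) (hPY : P ≤ 1 + Y) :
    (F + G ^ 2) * F ≤ 8 * (L + 8 * L ^ 2) * L * (1 + Y) := by
  have hsum := fte1_sum_bound hL hP0 hQ0 hG0 hF hG hQsqP hQP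
  have hLL : 0 < L + 8 * L ^ 2 := by nlinarith
  have h1 : (F + G ^ 2) * F ≤ (L + 8 * L ^ 2) * (1 + P) * (L * (1 + P)) := by
    apply mul_le_mul hsum hF hF0
    positivity
  have h2 : (1 + P) * (1 + P) ≤ 4 * (1 + Y) := by nlinarith
  nlinarith [mul_pos hLL hL, mul_le_mul_of_nonneg_left h2 (mul_pos hLL hL).le]

private lemma fte1_g_bound {L P Q Z F G : ℝ} (hL : 0 < L) (hP0 : 0 ≤ P) (hQ0 : 0 ≤ Q)
    (hZ0 : 0 ≤ Z) (hF0 : 0 ≤ F) (hG0 : 0 ≤ G)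
    (hF : F ≤ L * (1 + P)) (hG : G ≤ L * (1 + Q))
    (hPQ : P * Q = Z) (hQsqP : Q ^ 2 ≤ 1 + P) (hQP : Q ≤ 1 + P)
    (hPZ : P ≤ 1 + Z) (hQZ : Q ≤ 1 + Z) :
    (F + G ^ 2) * G ≤ 8 * (L + 8 * L ^ 2) * L * (1 + Z) := by
  have hsum := fte1_sum_bound hL hP0 hQ0 hG0 hF hG hQsqP hQP
  have hLL : 0 < L + 8 * L ^ 2 := by nlinarith
  have h1 : (F + G ^ 2) * G ≤ (L + 8 * L ^ 2) * (1 + P) * (L * (1 + Q)) := by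
    apply mul_le_mul hsum hG hG0
    positivity
  have h2 : (1 + P) * (1 + Q) ≤ 4 * (1 + Z) := by nlinarith
  nlinarith [mul_pos hLL hL, mul_le_mul_of_nonneg_left h2 (mul_pos hLL hL).le]

private lemma fte1_abs_bound {D : ℝ} (hD1 : 1 ≤ D) : |D⁻¹ - 1| ≤ D - 1 := by
  have hDpos : 0 < D := lt_of_lt_of_le one_pos hD1
  have hinv : D * D⁻¹ = 1 := mul_inv_cancel₀ hDpos.ne'
  have hinvle : D⁻¹ ≤ 1 := inv_le_one_of_one_le₀ hD1
  have hinvpos : 0 < D⁻¹ := inv_pos.mpr hDpos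
  rw [abs_of_nonpos (by linarith)]
  nlinarith [sq_nonneg (D - 1)]

/-- Modification-error bounds for the fully tamed Euler (FTE1) scheme: the tamed
coefficients differ from `f`, `g` by `O(h^{min α₁ α₂})` with polynomial weights.
`ℝ^{d×m}` is modelled as `EuclideanSpace ℝ (Fin d × Fin m)` (Frobenius norm). -/
theorem fte1_modification_error
    (L r ρ : ℝ) (hL : 0 < L) (hr : 0 ≤ r) (hρ0 : 0 ≤ ρ) (hρr : ρ ≤ r) :
    ∃ C : ℝ, 0 < C ∧ ∀ (d m : ℕ), 1 ≤ d → 1 ≤ m →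
      ∀ (f : EuclideanSpace ℝ (Fin d) → EuclideanSpace ℝ (Fin d))
        (g : EuclideanSpace ℝ (Fin d) → EuclideanSpace ℝ (Fin d × Fin m)),
      (∀ x, ‖f x‖ ≤ L * (1 + ‖x‖ ^ (2 * r + 1))) →
      (∀ x, ‖g x‖ ≤ L * (1 + ‖x‖ ^ ρ)) →
      ∀ (α₁ α₂ : ℝ), 0 < α₁ → α₁ ≤ 1 / 2 → 0 < α₂ → α₂ ≤ 1 / 2 →
      ∀ h : ℝ, 0 < h → h ≤ 1 → ∀ x : EuclideanSpace ℝ (Fin d),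
        ‖(1 + h ^ α₁ * ‖f x‖ + h ^ α₂ * ‖g x‖ ^ 2)⁻¹ • f x - f x‖
            ≤ C * h ^ (min α₁ α₂) * (1 + ‖x‖ ^ (4 * r + 2)) ∧
        ‖(1 + h ^ α₁ * ‖f x‖ + h ^ α₂ * ‖g x‖ ^ 2)⁻¹ • g x - g x‖
            ≤ C * h ^ (min α₁ α₂) * (1 + ‖x‖ ^ (2 * r + ρ + 1)) := by
  refine ⟨8 * (L + 8 * L ^ 2) * L, by positivity, ?_⟩
  intro d m hd hm f g hf hg α₁ α₂ hα₁ hα₁' hα₂ hα₂' h hh hh1 x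
  set X := ‖x‖ with hXdef
  have hX : 0 ≤ X := norm_nonneg x
  set F := ‖f x‖ with hFdef
  set G := ‖g x‖ with hGdef
  have hF0 : 0 ≤ F := norm_nonneg _
  have hG0 : 0 ≤ G := norm_nonneg _
  set α := min α₁ α₂ with hαdef
  have hhα : 0 ≤ h ^ α := Real.rpow_nonneg hh.le _
  have h1 : h ^ α₁ ≤ h ^ α := Real.rpow_le_rpow_of_exponent_ge hh hh1 (min_le_left _ _)
  have h2 : h ^ α₂ ≤ h ^ α := Real.rpow_le_rpow_of_exponent_ge hh hh1 (min_le_right _ _)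
  set D := 1 + h ^ α₁ * F + h ^ α₂ * G ^ 2 with hDdef
  have hh1' : 0 ≤ h ^ α₁ := Real.rpow_nonneg hh.le _
  have hh2' : 0 ≤ h ^ α₂ := Real.rpow_nonneg hh.le _
  have hD1 : 1 ≤ D := by
    have ha : 0 ≤ h ^ α₁ * F := mul_nonneg hh1' hF0
    have hb : 0 ≤ h ^ α₂ * G ^ 2 := mul_nonneg hh2' (sq_nonneg G)
    rw [hDdef]; linarith
  have habs : |D⁻¹ - 1| ≤ D - 1 := fte1_abs_bound hD1
  have hD2 : D - 1 ≤ h ^ α * (F + G ^ 2) := by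
    have ha := mul_le_mul_of_nonneg_right h1 hF0
    have hb := mul_le_mul_of_nonneg_right h2 (sq_nonneg G)
    rw [hDdef]; ring_nf; ring_nf at ha hb; linarith
  set P := X ^ (2 * r + 1) with hPdef
  set Q := X ^ ρ with hQdef
  set Y := X ^ (4 * r + 2) with hYdef
  set Z := X ^ (2 * r + ρ + 1) with hZdef
  have hP0 : 0 ≤ P := Real.rpow_nonneg hX _
  have hQ0 : 0 ≤ Q := Real.rpow_nonneg hX _
  have hY0 : 0 ≤ Y := Real.rpow_nonneg hX _
  have hZ0 : 0 ≤ Z := Real.rpow_nonneg hX _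
  have hPsq : P ^ 2 = Y := by
    rw [hPdef, hYdef, sq, ← Real.rpow_add_of_nonneg hX (by linarith) (by linarith)]
    ring_nf
  have hPQ : P * Q = Z := by
    rw [hPdef, hQdef, hZdef, ← Real.rpow_add_of_nonneg hX (by linarith) hρ0]
    ring_nf
  have hQsqP : Q ^ 2 ≤ 1 + P := by
    rw [hQdef, sq, ← Real.rpow_add_of_nonneg hX hρ0 hρ0]
    exact rpow_le_one_add_rpow hX (by linarith) (by linarith)
  have hQP : Q ≤ 1 + P := rpow_le_one_add_rpow hX hρ0 (by linarith)
  have hPY : P ≤ 1 + Y := rpow_le_one_add_rpow hX (by linarith) (by linarith)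
  have hPZ : P ≤ 1 + Z := rpow_le_one_add_rpow hX (by linarith) (by linarith)
  have hQZ : Q ≤ 1 + Z := rpow_le_one_add_rpow hX hρ0 (by linarith)
  have hFb := hf x
  have hGb := hg x
  constructor
  · have hnorm : ‖(1 + h ^ α₁ * ‖f x‖ + h ^ α₂ * ‖g x‖ ^ 2)⁻¹ • f x - f x‖
        = |D⁻¹ - 1| * F := by
      rw [show (1 + h ^ α₁ * ‖f x‖ + h ^ α₂ * ‖g x‖ ^ 2)⁻¹ • f x - f x
            = (D⁻¹ - 1) • f x by rw [sub_smul, one_smul], norm_smul, Real.norm_eq_abs]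
    rw [hnorm]
    have step1 : |D⁻¹ - 1| * F ≤ h ^ α * ((F + G ^ 2) * F) := by
      calc |D⁻¹ - 1| * F ≤ (D - 1) * F := mul_le_mul_of_nonneg_right habs hF0
        _ ≤ h ^ α * (F + G ^ 2) * F := mul_le_mul_of_nonneg_right hD2 hF0
        _ = h ^ α * ((F + G ^ 2) * F) := by ring
    refine step1.trans ?_
    rw [show 8 * (L + 8 * L ^ 2) * L * h ^ α * (1 + X ^ (4 * r + 2))
          = h ^ α * (8 * (L + 8 * L ^ 2) * L * (1 + Y)) by rw [← hYdef]; ring]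
    exact mul_le_mul_of_nonneg_left
      (fte1_f_bound hL hP0 hQ0 hY0 hF0 hG0 hFb hGb hPsq hQsqP hQP hPY) hhα
  · have hnorm : ‖(1 + h ^ α₁ * ‖f x‖ + h ^ α₂ * ‖g x‖ ^ 2)⁻¹ • g x - g x‖
        = |D⁻¹ - 1| * G := by
      rw [show (1 + h ^ α₁ * ‖f x‖ + h ^ α₂ * ‖g x‖ ^ 2)⁻¹ • g x - g x
            = (D⁻¹ - 1) • g x by rw [sub_smul, one_smul], norm_smul, Real.norm_eq_abs]
    rw [hnorm]
    have step1 : |D⁻¹ - 1| * G ≤ h ^ α * ((F + G ^ 2) * G) := by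
      calc |D⁻¹ - 1| * G ≤ (D - 1) * G := mul_le_mul_of_nonneg_right habs hG0
        _ ≤ h ^ α * (F + G ^ 2) * G := mul_le_mul_of_nonneg_right hD2 hG0
        _ = h ^ α * ((F + G ^ 2) * G) := by ring
    refine step1.trans ?_
    rw [show 8 * (L + 8 * L ^ 2) * L * h ^ α * (1 + X ^ (2 * r + ρ + 1))
          = h ^ α * (8 * (L + 8 * L ^ 2) * L * (1 + Z)) by rw [← hZdef]; ring]
    exact mul_le_mul_of_nonneg_left
      (fte1_g_bound hL hP0 hQ0 hZ0 hF0 hG0 hFb hGb hPQ hQsqP hQP hPZ hQZ) hhα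
end

section
/- Let d, m ≥ 1, L > 0, r ≥ 0, 0 ≤ ρ ≤ r, 0 < ϑ ≤ 1/2, and suppose f : ℝ^d → ℝ^d satisfies |f(x)| ≤ L(1+|x|^{2r+1}) and g : ℝ^d → ℝ^{d×m} satisfies ‖g(x)‖ ≤ L(1+|x|^ρ) for all x ∈ ℝ^d. Then there exists a constant C depending only on L, r and ρ such that for all h ∈ (0,1] and all x ∈ ℝ^d, the fully tamed Euler (FTE2) coefficients satisfy (i) |f̄_h(x)| ≤ min( C h^{−ϑ}(1+|x|), |f(x)| ) and (ii) ‖ḡ_h(x)‖² ≤ min( C h^{−ϑ}(1+|x|²), ‖g(x)‖² ); moreover, (iii) if there exist μ > 0 and C₀ ≥ 0 with ⟨x, f(x)⟩ + μ‖g(x)‖² ≤ C₀(1+|x|²) for all x, then ⟨x, f̄_h(x)⟩ + μ‖ḡ_h(x)‖² ≤ C₀(1+|x|²) for all x and all h > 0. -/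
set_option maxHeartbeats 1000000

open scoped RealInnerProductSpace

lemma fte2_key1 (L E I P a : ℝ) (hL : 0 < L) (hE : 0 < E) (hI : 1 ≤ I)
    (hEI : I * E = 1) (hP : 0 ≤ P) (ha : 0 ≤ a) :
    L * (1 + P * a) ≤ (1 + E * P) * (4 * (L + 1) ^ 2 * I * (1 + a)) := by
  have h1 : (1 + E * P) * (4 * (L + 1) ^ 2 * I * (1 + a))
      = 4 * (L + 1) ^ 2 * (I * (1 + a)) + 4 * (L + 1) ^ 2 * ((I * E) * (P * (1 + a))) := by
    ring
  rw [h1, hEI]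
  have h2 : (1:ℝ) * (1 + a) ≤ I * (1 + a) :=
    mul_le_mul_of_nonneg_right hI (by linarith)
  nlinarith [mul_nonneg hP ha, mul_nonneg (mul_nonneg hP ha) (sq_nonneg L),
    mul_nonneg (mul_nonneg hP ha) (le_of_lt hL), sq_nonneg L]

lemma fte2_key2 (L E I P b c : ℝ) (hL : 0 < L) (hE : 0 < E) (hI : 1 ≤ I)
    (hEI : I * E = 1) (hP : 0 ≤ P) (hb : 0 ≤ b) (hc : 0 ≤ c)
    (hb2 : b ^ 2 ≤ 1 + P * c) :
    L ^ 2 * (1 + b) ^ 2 ≤ (1 + E * P) * (4 * (L + 1) ^ 2 * I * (1 + c)) := by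
  have h0 : (1 + b) ^ 2 ≤ 4 + 2 * (P * c) := by nlinarith [sq_nonneg (1 - b)]
  have h1 : (1 + E * P) * (4 * (L + 1) ^ 2 * I * (1 + c))
      = 4 * (L + 1) ^ 2 * (I * (1 + c)) + 4 * (L + 1) ^ 2 * ((I * E) * (P * (1 + c))) := by
    ring
  rw [h1, hEI]
  have h2 : (1:ℝ) * (1 + c) ≤ I * (1 + c) :=
    mul_le_mul_of_nonneg_right hI (by linarith)
  nlinarith [mul_nonneg hP hc, mul_nonneg (mul_nonneg hP hc) (sq_nonneg L),
    mul_le_mul_of_nonneg_left h0 (sq_nonneg L),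
    mul_nonneg (mul_nonneg hP hc) (le_of_lt hL), sq_nonneg L]

/-- The fully tamed Euler (FTE2) coefficients
`f̄_h(x) = f(x)/(1+h^ϑ|x|^{2r})`, `ḡ_h(x) = g(x)/(1+h^ϑ|x|^{2r})`
satisfy the sublinear taming bounds (i), (ii) with parameter `θ = ϑ`, and (iii)
inherit the one-sided (Khasminskii-type) condition from `f` and `g`.
`ℝ^{d×m}` is modelled as `EuclideanSpace ℝ (Fin d × Fin m)` (Frobenius norm). -/
theorem fte2_taming_bounds
    (L r ρ ϑ : ℝ) (hL : 0 < L) (hr : 0 ≤ r) (hρ0 : 0 ≤ ρ) (hρr : ρ ≤ r)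
    (hϑ : 0 < ϑ) (hϑ' : ϑ ≤ 1 / 2) :
    ∃ C : ℝ, 0 < C ∧ ∀ (d m : ℕ), 1 ≤ d → 1 ≤ m →
      ∀ (f : EuclideanSpace ℝ (Fin d) → EuclideanSpace ℝ (Fin d))
        (g : EuclideanSpace ℝ (Fin d) → EuclideanSpace ℝ (Fin d × Fin m)),
      (∀ x, ‖f x‖ ≤ L * (1 + ‖x‖ ^ (2 * r + 1))) →
      (∀ x, ‖g x‖ ≤ L * (1 + ‖x‖ ^ ρ)) →
      -- (i) and (ii): sublinear taming bounds
      ((∀ h : ℝ, 0 < h → h ≤ 1 → ∀ x : EuclideanSpace ℝ (Fin d),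
        ‖(1 + h ^ ϑ * ‖x‖ ^ (2 * r))⁻¹ • f x‖
            ≤ min (C * h ^ (-ϑ) * (1 + ‖x‖)) ‖f x‖ ∧
        ‖(1 + h ^ ϑ * ‖x‖ ^ (2 * r))⁻¹ • g x‖ ^ 2
            ≤ min (C * h ^ (-ϑ) * (1 + ‖x‖ ^ 2)) (‖g x‖ ^ 2)) ∧
      -- (iii): the Khasminskii-type condition is preserved
      (∀ μc C₀ : ℝ, 0 < μc → 0 ≤ C₀ →
        (∀ x : EuclideanSpace ℝ (Fin d),
          ⟪x, f x⟫ + μc * ‖g x‖ ^ 2 ≤ C₀ * (1 + ‖x‖ ^ 2)) →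
        ∀ h : ℝ, 0 < h → ∀ x : EuclideanSpace ℝ (Fin d),
          ⟪x, (1 + h ^ ϑ * ‖x‖ ^ (2 * r))⁻¹ • f x⟫
              + μc * ‖(1 + h ^ ϑ * ‖x‖ ^ (2 * r))⁻¹ • g x‖ ^ 2
            ≤ C₀ * (1 + ‖x‖ ^ 2))) := by
  refine ⟨4 * (L + 1) ^ 2, by positivity, ?_⟩
  intro d m hd hm f g hf hg
  constructor
  · intro h hh hh1 x
    have ha0 : 0 ≤ ‖x‖ := norm_nonneg x
    have hE : (0:ℝ) < h ^ ϑ := Real.rpow_pos_of_pos hh ϑ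
    have hP : 0 ≤ ‖x‖ ^ (2*r) := Real.rpow_nonneg ha0 _
    have hE1 : h ^ ϑ ≤ 1 := Real.rpow_le_one hh.le hh1 hϑ.le
    have hEinv1 : 1 ≤ h ^ (-ϑ) := by
      rw [Real.rpow_neg hh.le]; exact one_le_inv_iff₀.mpr ⟨hE, hE1⟩
    have hEE : h ^ (-ϑ) * h ^ ϑ = 1 := by
      rw [Real.rpow_neg hh.le]; exact inv_mul_cancel₀ (ne_of_gt hE)
    have hQ : ‖x‖ ^ (2*r+1) = ‖x‖ ^ (2*r) * ‖x‖ := by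
      rcases eq_or_lt_of_le ha0 with h0 | h0
      · rw [← h0, mul_zero, Real.zero_rpow (by positivity)]
      · exact Real.rpow_add_one (ne_of_gt h0) _
    have hb0 : 0 ≤ ‖x‖ ^ ρ := Real.rpow_nonneg ha0 _
    have hb2 : (‖x‖ ^ ρ) ^ 2 ≤ 1 + ‖x‖ ^ (2*r) * ‖x‖ ^ 2 := by
      by_cases h1 : ‖x‖ ≤ 1
      · have : ‖x‖ ^ ρ ≤ 1 := Real.rpow_le_one ha0 h1 hρ0
        nlinarith [sq_nonneg ‖x‖, mul_nonneg hP (sq_nonneg ‖x‖)]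
      · push_neg at h1
        have hpos : (0:ℝ) < ‖x‖ := lt_trans one_pos h1
        have e1 : (‖x‖ ^ ρ) ^ 2 = ‖x‖ ^ (2*ρ) := by
          rw [← Real.rpow_natCast (‖x‖ ^ ρ) 2, ← Real.rpow_mul ha0]
          norm_num [mul_comm]
        have e2 : ‖x‖ ^ (2*ρ) ≤ ‖x‖ ^ (2*r + 2) :=
          Real.rpow_le_rpow_of_exponent_le h1.le (by linarith)
        have e3 : ‖x‖ ^ (2*r + 2) = ‖x‖ ^ (2*r) * ‖x‖ ^ 2 := by
          rw [← Real.rpow_natCast ‖x‖ 2, ← Real.rpow_add hpos]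
          norm_num
        nlinarith [hP, sq_nonneg ‖x‖]
    -- abstract everything to real variables
    obtain ⟨a, ha⟩ : ∃ a, ‖x‖ = a := ⟨_, rfl⟩
    obtain ⟨E, hEd⟩ : ∃ E, h ^ ϑ = E := ⟨_, rfl⟩
    obtain ⟨I, hId⟩ : ∃ I, h ^ (-ϑ) = I := ⟨_, rfl⟩
    obtain ⟨P, hPd⟩ : ∃ P, ‖x‖ ^ (2*r) = P := ⟨_, rfl⟩
    obtain ⟨b, hbd⟩ : ∃ b, ‖x‖ ^ ρ = b := ⟨_, rfl⟩
    obtain ⟨F, hFd⟩ : ∃ F, ‖f x‖ = F := ⟨_, rfl⟩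
    obtain ⟨G, hGd⟩ : ∃ G, ‖g x‖ = G := ⟨_, rfl⟩
    have hfx := hf x
    have hgx := hg x
    rw [hQ] at hfx
    rw [norm_smul (1 + h ^ ϑ * ‖x‖ ^ (2 * r))⁻¹ (f x),
        norm_smul (1 + h ^ ϑ * ‖x‖ ^ (2 * r))⁻¹ (g x),
        Real.norm_eq_abs]
    rw [hFd] at hfx ⊢
    rw [hGd] at hgx ⊢
    rw [hbd] at hb0 hb2 hgx
    rw [hPd] at hP hb2 hfx ⊢
    rw [hEd] at hE hE1 hEE ⊢
    rw [hId] at hEinv1 hEE ⊢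
    rw [ha] at ha0 hb2 hfx ⊢
    have hF0 : 0 ≤ F := hFd ▸ norm_nonneg _
    have hG0 : 0 ≤ G := hGd ▸ norm_nonneg _
    clear hf hg hQ hFd hGd hbd hPd hEd hId ha f g x
    have hD0 : (0:ℝ) < 1 + E * P := by nlinarith
    have hD1 : (1:ℝ) ≤ 1 + E * P := by nlinarith
    have hDinv1 : (1 + E * P)⁻¹ ≤ 1 := inv_le_one_iff₀.mpr (Or.inr hD1)
    have hDinv0 : 0 < (1 + E * P)⁻¹ := inv_pos.2 hD0
    rw [abs_of_pos hDinv0]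
    constructor
    · rw [le_min_iff]
      refine ⟨?_, mul_le_of_le_one_left hF0 hDinv1⟩
      rw [inv_mul_le_iff₀ hD0]
      calc F ≤ L * (1 + P * a) := hfx
        _ ≤ (1 + E * P) * (4 * (L+1)^2 * I * (1 + a)) :=
            fte2_key1 L E I P a hL hE hEinv1 hEE hP ha0
    · rw [mul_pow, le_min_iff]
      have hDsq : ((1 + E * P)⁻¹) ^ 2 ≤ (1 + E * P)⁻¹ := by nlinarith
      have hDsq1 : ((1 + E * P)⁻¹) ^ 2 ≤ 1 := by nlinarith
      refine ⟨?_, mul_le_of_le_one_left (sq_nonneg G) hDsq1⟩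
      have hgsq : G ^ 2 ≤ L ^ 2 * (1 + b) ^ 2 := by nlinarith
      calc ((1 + E * P)⁻¹) ^ 2 * G ^ 2 ≤ (1 + E * P)⁻¹ * (L ^ 2 * (1 + b) ^ 2) := by
            nlinarith [mul_le_mul_of_nonneg_left hgsq (le_of_lt hDinv0),
              mul_le_mul_of_nonneg_right hDsq (sq_nonneg G)]
        _ ≤ 4 * (L+1)^2 * I * (1 + a ^ 2) := by
            rw [inv_mul_le_iff₀ hD0]
            exact fte2_key2 L E I P b (a ^ 2) hL hE hEinv1 hEE hP hb0
              (sq_nonneg a) hb2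
  · intro μc C₀ hμ hC₀ hK h hh x
    have ha0 : 0 ≤ ‖x‖ := norm_nonneg x
    have hE : (0:ℝ) < h ^ ϑ := Real.rpow_pos_of_pos hh ϑ
    have hP : 0 ≤ ‖x‖ ^ (2*r) := Real.rpow_nonneg ha0 _
    have hKx := hK x
    have hi : ⟪x, (1 + h ^ ϑ * ‖x‖ ^ (2 * r))⁻¹ • f x⟫
        = (1 + h ^ ϑ * ‖x‖ ^ (2 * r))⁻¹ * ⟪x, f x⟫ := real_inner_smul_right _ _ _
    rw [hi, norm_smul (1 + h ^ ϑ * ‖x‖ ^ (2 * r))⁻¹ (g x), Real.norm_eq_abs]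
    obtain ⟨a, ha⟩ : ∃ a, ‖x‖ = a := ⟨_, rfl⟩
    obtain ⟨E, hEd⟩ : ∃ E, h ^ ϑ = E := ⟨_, rfl⟩
    obtain ⟨P, hPd⟩ : ∃ P, ‖x‖ ^ (2*r) = P := ⟨_, rfl⟩
    obtain ⟨G, hGd⟩ : ∃ G, ‖g x‖ = G := ⟨_, rfl⟩
    obtain ⟨S, hSd⟩ : ∃ S, ⟪x, f x⟫ = S := ⟨_, rfl⟩
    rw [hGd, hSd] at hKx ⊢
    rw [hPd] at hP ⊢
    rw [hEd] at hE ⊢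
    rw [ha] at ha0 hKx ⊢
    have hG0 : 0 ≤ G := hGd ▸ norm_nonneg _
    clear hf hg hK hi hGd hSd hPd hEd ha f g x
    have hD0 : (0:ℝ) < 1 + E * P := by nlinarith
    have hD1 : (1:ℝ) ≤ 1 + E * P := by nlinarith
    have hDinv1 : (1 + E * P)⁻¹ ≤ 1 := inv_le_one_iff₀.mpr (Or.inr hD1)
    have hDinv0 : 0 < (1 + E * P)⁻¹ := inv_pos.2 hD0
    rw [abs_of_pos hDinv0, mul_pow]
    have hR0 : 0 ≤ C₀ * (1 + a ^ 2) := by positivity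
    have hDsq : ((1 + E * P)⁻¹) ^ 2 ≤ (1 + E * P)⁻¹ := by nlinarith
    nlinarith [mul_le_mul_of_nonneg_left hKx (le_of_lt hDinv0),
      mul_nonneg (mul_nonneg (le_of_lt hμ) (sq_nonneg G)) (sub_nonneg.2 hDsq),
      mul_nonneg hR0 (sub_nonneg.2 hDinv1)]
end

section
/- Let d, m ≥ 1, L > 0, r ≥ 0, 0 ≤ ρ ≤ r, 0 < ϑ ≤ 1/2, and suppose f : ℝ^d → ℝ^d satisfies |f(x)| ≤ L(1+|x|^{2r+1}) and g : ℝ^d → ℝ^{d×m} satisfies ‖g(x)‖ ≤ L(1+|x|^ρ) for all x ∈ ℝ^d. Then there exists a constant C depending only on L, r and ρ such that for all h > 0 and all x ∈ ℝ^d, the fully tamed Euler (FTE2) coefficients satisfy |f̄_h(x) − f(x)| ≤ C h^{ϑ}(1+|x|^{4r+1}) and ‖ḡ_h(x) − g(x)‖ ≤ C h^{ϑ}(1+|x|^{2r+ρ}). -/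
lemma fte2_aux_smul {E : Type*} [NormedAddCommGroup E] [NormedSpace ℝ E]
    (t : ℝ) (ht : 0 ≤ t) (v : E) : ‖(1 + t)⁻¹ • v - v‖ ≤ t * ‖v‖ := by
  have h1 : (0:ℝ) < 1 + t := by linarith
  have hinv : (1 + t)⁻¹ * (1 + t) = 1 := inv_mul_cancel₀ (ne_of_gt h1)
  have : (1 + t)⁻¹ • v - v = ((1 + t)⁻¹ - 1) • v := by rw [sub_smul, one_smul]
  rw [this, norm_smul, Real.norm_eq_abs]
  have hle : (1 + t)⁻¹ ≤ 1 := by nlinarith [inv_nonneg.mpr h1.le]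
  rw [abs_of_nonpos (by linarith)]
  have : -((1 + t)⁻¹ - 1) ≤ t := by nlinarith [inv_nonneg.mpr h1.le]
  exact mul_le_mul_of_nonneg_right this (norm_nonneg v)

lemma fte2_aux_mono {s a b : ℝ} (hs : 0 ≤ s) (hab : a ≤ b) (ha : 0 ≤ a) :
    s ^ a ≤ 1 + s ^ b := by
  rcases le_or_gt s 1 with h | h
  · have : s ^ a ≤ 1 := Real.rpow_le_one hs h ha
    have : (0:ℝ) ≤ s ^ b := Real.rpow_nonneg hs b
    linarith [Real.rpow_le_one hs ‹s ≤ 1› ha]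
  · have := Real.rpow_le_rpow_of_exponent_le h.le hab
    linarith

lemma fte2_aux_prod {s a b : ℝ} (hs : 0 ≤ s) (ha : 0 ≤ a) (hb : 0 ≤ b) :
    s ^ a * s ^ b ≤ 1 + s ^ (a + b) := by
  rcases eq_or_lt_of_le hs with h | h
  · have h1 : s ^ a ≤ 1 := by
      rcases eq_or_lt_of_le ha with ha' | ha'
      · simp [← ha']
      · rw [← h, Real.zero_rpow (ne_of_gt ha')]; norm_num
    have h2 : s ^ b ≤ 1 := by
      rcases eq_or_lt_of_le hb with hb' | hb'
      · simp [← hb']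
      · rw [← h, Real.zero_rpow (ne_of_gt hb')]; norm_num
    have h3 : (0:ℝ) ≤ s ^ (a + b) := Real.rpow_nonneg hs _
    nlinarith [Real.rpow_nonneg hs a, Real.rpow_nonneg hs b]
  · rw [← Real.rpow_add h]
    have : (0:ℝ) ≤ s ^ (a + b) := Real.rpow_nonneg hs _
    linarith

/-- Modification-error bounds for the fully tamed Euler (FTE2) scheme: the tamed
coefficients `f̄_h(x) = f(x)/(1+h^ϑ|x|^{2r})`, `ḡ_h(x) = g(x)/(1+h^ϑ|x|^{2r})`
differ from `f`, `g` by `O(h^ϑ)` with polynomial weights.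
`ℝ^{d×m}` is modelled as `EuclideanSpace ℝ (Fin d × Fin m)` (Frobenius norm). -/
theorem fte2_modification_error
    (L r ρ ϑ : ℝ) (hL : 0 < L) (hr : 0 ≤ r) (hρ0 : 0 ≤ ρ) (hρr : ρ ≤ r)
    (hϑ : 0 < ϑ) (hϑ' : ϑ ≤ 1 / 2) :
    ∃ C : ℝ, 0 < C ∧ ∀ (d m : ℕ), 1 ≤ d → 1 ≤ m →
      ∀ (f : EuclideanSpace ℝ (Fin d) → EuclideanSpace ℝ (Fin d))
        (g : EuclideanSpace ℝ (Fin d) → EuclideanSpace ℝ (Fin d × Fin m)),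
      (∀ x, ‖f x‖ ≤ L * (1 + ‖x‖ ^ (2 * r + 1))) →
      (∀ x, ‖g x‖ ≤ L * (1 + ‖x‖ ^ ρ)) →
      ∀ h : ℝ, 0 < h → ∀ x : EuclideanSpace ℝ (Fin d),
        ‖(1 + h ^ ϑ * ‖x‖ ^ (2 * r))⁻¹ • f x - f x‖
            ≤ C * h ^ ϑ * (1 + ‖x‖ ^ (4 * r + 1)) ∧
        ‖(1 + h ^ ϑ * ‖x‖ ^ (2 * r))⁻¹ • g x - g x‖
            ≤ C * h ^ ϑ * (1 + ‖x‖ ^ (2 * r + ρ)) := by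
  refine ⟨2 * L, by linarith, ?_⟩
  intro d m hd hm f g hf hg h hh x
  set s := ‖x‖ with hs
  have hs0 : 0 ≤ s := norm_nonneg x
  have hhϑ : 0 ≤ h ^ ϑ := Real.rpow_nonneg hh.le ϑ
  have hsr : 0 ≤ s ^ (2 * r) := Real.rpow_nonneg hs0 _
  have ht : 0 ≤ h ^ ϑ * s ^ (2 * r) := mul_nonneg hhϑ hsr
  constructor
  · have h1 := fte2_aux_smul (h ^ ϑ * s ^ (2 * r)) ht (f x)
    have h2 : s ^ (2 * r) * (1 + s ^ (2 * r + 1)) ≤ 2 * (1 + s ^ (4 * r + 1)) := by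
      have hm1 : s ^ (2 * r) ≤ 1 + s ^ (4 * r + 1) :=
        fte2_aux_mono hs0 (by linarith) (by linarith)
      have hp : s ^ (2 * r) * s ^ (2 * r + 1) ≤ 1 + s ^ (4 * r + 1) := by
        have := fte2_aux_prod hs0 (a := 2 * r) (b := 2 * r + 1) (by linarith) (by linarith)
        have heq : 2 * r + (2 * r + 1) = 4 * r + 1 := by ring
        rwa [heq] at this
      nlinarith [Real.rpow_nonneg hs0 (2 * r + 1)]
    calc ‖(1 + h ^ ϑ * s ^ (2 * r))⁻¹ • f x - f x‖
        ≤ h ^ ϑ * s ^ (2 * r) * ‖f x‖ := h1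
      _ ≤ h ^ ϑ * s ^ (2 * r) * (L * (1 + s ^ (2 * r + 1))) :=
          mul_le_mul_of_nonneg_left (hf x) ht
      _ = h ^ ϑ * L * (s ^ (2 * r) * (1 + s ^ (2 * r + 1))) := by ring
      _ ≤ h ^ ϑ * L * (2 * (1 + s ^ (4 * r + 1))) :=
          mul_le_mul_of_nonneg_left h2 (mul_nonneg hhϑ hL.le)
      _ = 2 * L * h ^ ϑ * (1 + s ^ (4 * r + 1)) := by ring
  · have h1 := fte2_aux_smul (h ^ ϑ * s ^ (2 * r)) ht (g x)
    have h2 : s ^ (2 * r) * (1 + s ^ ρ) ≤ 2 * (1 + s ^ (2 * r + ρ)) := by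
      have hm1 : s ^ (2 * r) ≤ 1 + s ^ (2 * r + ρ) :=
        fte2_aux_mono hs0 (by linarith) (by linarith)
      have hp : s ^ (2 * r) * s ^ ρ ≤ 1 + s ^ (2 * r + ρ) :=
        fte2_aux_prod hs0 (by linarith) hρ0
      nlinarith [Real.rpow_nonneg hs0 ρ]
    calc ‖(1 + h ^ ϑ * s ^ (2 * r))⁻¹ • g x - g x‖
        ≤ h ^ ϑ * s ^ (2 * r) * ‖g x‖ := h1
      _ ≤ h ^ ϑ * s ^ (2 * r) * (L * (1 + s ^ ρ)) :=
          mul_le_mul_of_nonneg_left (hg x) ht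
      _ = h ^ ϑ * L * (s ^ (2 * r) * (1 + s ^ ρ)) := by ring
      _ ≤ h ^ ϑ * L * (2 * (1 + s ^ (2 * r + ρ))) :=
          mul_le_mul_of_nonneg_left h2 (mul_nonneg hhϑ hL.le)
      _ = 2 * L * h ^ ϑ * (1 + s ^ (2 * r + ρ)) := by ring
end

section
/- Let d, m ≥ 1, f : ℝ^d → ℝ^d, g : ℝ^d → ℝ^{d×m}. Then for every h > 0 and every x ∈ ℝ^d, the modified Euler scheme (MES) coefficients satisfy (i) |f̄_h(x)| ≤ min( 1/(2√h), |f(x)| ) and (ii) ‖ḡ_h(x)‖ ≤ ‖g(x)‖; moreover, (iii) if there exist μ > 0 and C₀ ≥ 0 with ⟨x, f(x)⟩ + μ‖g(x)‖² ≤ C₀(1+|x|²) for all x ∈ ℝ^d, then ⟨x, f̄_h(x)⟩ + μ‖ḡ_h(x)‖² ≤ C₀(1+|x|²) for all x ∈ ℝ^d and all h > 0. -/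
open scoped RealInnerProductSpace

lemma mes_denom_pos (h y : ℝ) (hh : 0 < h) : 0 < 1 + h * y ^ 2 := by positivity

lemma mes_key (h y : ℝ) (hh : 0 < h) (hy : 0 ≤ y) :
    y / (1 + h * y ^ 2) ≤ 1 / (2 * Real.sqrt h) := by
  have hs : 0 < Real.sqrt h := Real.sqrt_pos.mpr hh
  rw [div_le_div_iff₀ (mes_denom_pos h y hh) (by positivity)]
  have h1 : 0 ≤ (Real.sqrt h * y - 1) ^ 2 := sq_nonneg _
  have h2 : Real.sqrt h * Real.sqrt h = h := Real.mul_self_sqrt hh.le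
  nlinarith [sq_nonneg (Real.sqrt h * y - 1)]

/-- The modified Euler scheme (MES) coefficients
`f̄_h(x) = f(x)/(1+h|f(x)|²)`, `ḡ_h(x) = g(x)/(1+h|f(x)|²)` satisfy
(i) `|f̄_h(x)| ≤ min(1/(2√h), |f(x)|)`, (ii) `‖ḡ_h(x)‖ ≤ ‖g(x)‖`, and
(iii) inherit the one-sided (Khasminskii-type) condition from `f` and `g`.
`ℝ^{d×m}` is modelled as `EuclideanSpace ℝ (Fin d × Fin m)` (Frobenius norm). -/
theorem mes_taming_bounds
    (d m : ℕ) (hd : 1 ≤ d) (hm : 1 ≤ m)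
    (f : EuclideanSpace ℝ (Fin d) → EuclideanSpace ℝ (Fin d))
    (g : EuclideanSpace ℝ (Fin d) → EuclideanSpace ℝ (Fin d × Fin m)) :
    -- (i) and (ii)
    (∀ h : ℝ, 0 < h → ∀ x : EuclideanSpace ℝ (Fin d),
      ‖(1 + h * ‖f x‖ ^ 2)⁻¹ • f x‖ ≤ min (1 / (2 * Real.sqrt h)) ‖f x‖ ∧
      ‖(1 + h * ‖f x‖ ^ 2)⁻¹ • g x‖ ≤ ‖g x‖) ∧
    -- (iii)
    (∀ μc C₀ : ℝ, 0 < μc → 0 ≤ C₀ →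
      (∀ x : EuclideanSpace ℝ (Fin d),
        ⟪x, f x⟫ + μc * ‖g x‖ ^ 2 ≤ C₀ * (1 + ‖x‖ ^ 2)) →
      ∀ h : ℝ, 0 < h → ∀ x : EuclideanSpace ℝ (Fin d),
        ⟪x, (1 + h * ‖f x‖ ^ 2)⁻¹ • f x⟫
            + μc * ‖(1 + h * ‖f x‖ ^ 2)⁻¹ • g x‖ ^ 2
          ≤ C₀ * (1 + ‖x‖ ^ 2)) := by
  constructor
  · intro h hh x
    have hD : 0 < 1 + h * ‖f x‖ ^ 2 := mes_denom_pos _ _ hh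
    have hD1 : (1:ℝ) ≤ 1 + h * ‖f x‖ ^ 2 := by nlinarith [sq_nonneg ‖f x‖]
    have habs : |(1 + h * ‖f x‖ ^ 2)⁻¹| = (1 + h * ‖f x‖ ^ 2)⁻¹ :=
      abs_of_pos (inv_pos.mpr hD)
    constructor
    · rw [norm_smul, Real.norm_eq_abs, habs, le_min_iff]
      constructor
      · have := mes_key h ‖f x‖ hh (norm_nonneg _)
        rwa [div_eq_inv_mul] at this
      · calc (1 + h * ‖f x‖ ^ 2)⁻¹ * ‖f x‖ ≤ 1 * ‖f x‖ := by
              apply mul_le_mul_of_nonneg_right _ (norm_nonneg _)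
              exact inv_le_one_of_one_le₀ hD1
          _ = ‖f x‖ := one_mul _
    · rw [norm_smul, Real.norm_eq_abs, habs]
      calc (1 + h * ‖f x‖ ^ 2)⁻¹ * ‖g x‖ ≤ 1 * ‖g x‖ := by
            apply mul_le_mul_of_nonneg_right _ (norm_nonneg _)
            exact inv_le_one_of_one_le₀ hD1
        _ = ‖g x‖ := one_mul _
  · intro μc C₀ hμ hC hK h hh x
    have hD : 0 < 1 + h * ‖f x‖ ^ 2 := mes_denom_pos _ _ hh
    have hD1 : (1:ℝ) ≤ 1 + h * ‖f x‖ ^ 2 := by nlinarith [sq_nonneg ‖f x‖]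
    set D := 1 + h * ‖f x‖ ^ 2 with hDdef
    have hinner : ⟪x, D⁻¹ • f x⟫ = D⁻¹ * ⟪x, f x⟫ := real_inner_smul_right _ _ _
    have hnorm : ‖D⁻¹ • g x‖ ^ 2 = D⁻¹ ^ 2 * ‖g x‖ ^ 2 := by
      rw [norm_smul, Real.norm_eq_abs, abs_of_pos (inv_pos.mpr hD), mul_pow]
    rw [hinner, hnorm]
    have hinv1 : D⁻¹ ≤ 1 := inv_le_one_of_one_le₀ hD1
    have hinv0 : 0 < D⁻¹ := inv_pos.mpr hD
    have h1 : μc * (D⁻¹ ^ 2 * ‖g x‖ ^ 2) ≤ μc * (D⁻¹ * ‖g x‖ ^ 2) := by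
      apply mul_le_mul_of_nonneg_left _ hμ.le
      apply mul_le_mul_of_nonneg_right _ (sq_nonneg _)
      nlinarith
    have h2 : D⁻¹ * ⟪x, f x⟫ + μc * (D⁻¹ * ‖g x‖ ^ 2)
        = D⁻¹ * (⟪x, f x⟫ + μc * ‖g x‖ ^ 2) := by ring
    have hS := hK x
    have hR : 0 ≤ C₀ * (1 + ‖x‖ ^ 2) := by positivity
    have h3 : D⁻¹ * (⟪x, f x⟫ + μc * ‖g x‖ ^ 2) ≤ C₀ * (1 + ‖x‖ ^ 2) := by
      rcases le_or_gt 0 (⟪x, f x⟫ + μc * ‖g x‖ ^ 2) with hS0 | hS0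
      · calc D⁻¹ * (⟪x, f x⟫ + μc * ‖g x‖ ^ 2) ≤ 1 * (⟪x, f x⟫ + μc * ‖g x‖ ^ 2) :=
              mul_le_mul_of_nonneg_right hinv1 hS0
          _ = _ := one_mul _
          _ ≤ _ := hS
      · have : D⁻¹ * (⟪x, f x⟫ + μc * ‖g x‖ ^ 2) ≤ 0 :=
          mul_nonpos_of_nonneg_of_nonpos hinv0.le hS0.le
        linarith
    linarith
end

section
/- Let d, m ≥ 1, L > 0, r ≥ 0, 0 ≤ ρ ≤ r, and suppose f : ℝ^d → ℝ^d satisfies |f(x)| ≤ L(1+|x|^{2r+1}) and g : ℝ^d → ℝ^{d×m} satisfies ‖g(x)‖ ≤ L(1+|x|^ρ) for all x ∈ ℝ^d. Then there exists a constant C depending only on L, r and ρ such that for all h > 0 and all x ∈ ℝ^d, the modified Euler scheme (MES) coefficients satisfy |f̄_h(x) − f(x)| ≤ C h(1+|x|^{6r+3}) and ‖ḡ_h(x) − g(x)‖ ≤ C h(1+|x|^{4r+ρ+2}). -/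
lemma mes_aux_add (a p q : ℝ) (ha : 0 ≤ a) (hp : 0 ≤ p) (hq : 0 ≤ q) :
    a ^ p + a ^ q ≤ 1 + a ^ (p + q) := by
  rcases eq_or_lt_of_le hp with h0 | h0
  · simp [← h0]
  rcases eq_or_lt_of_le hq with h0' | h0'
  · simp [← h0']; linarith
  rcases eq_or_lt_of_le ha with h | h
  · simp [← h, Real.zero_rpow h0.ne', Real.zero_rpow h0'.ne',
      Real.zero_rpow (by positivity : p + q ≠ 0)]
  · have hmul : a ^ (p + q) = a ^ p * a ^ q := Real.rpow_add h p q
    rcases le_total a 1 with h1 | h1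
    · have e1 : a ^ p ≤ 1 := Real.rpow_le_one ha h1 hp
      have e2 : a ^ q ≤ 1 := Real.rpow_le_one ha h1 hq
      nlinarith
    · have e1 : 1 ≤ a ^ p := Real.one_le_rpow h1 hp
      have e2 : 1 ≤ a ^ q := Real.one_le_rpow h1 hq
      nlinarith

lemma mes_aux_mul (a p q : ℝ) (ha : 0 ≤ a) (hp : 0 ≤ p) (hq : 0 ≤ q) :
    (1 + a ^ p) * (1 + a ^ q) ≤ 2 * (1 + a ^ (p + q)) := by
  have h1 := mes_aux_add a p q ha hp hq
  rcases eq_or_lt_of_le ha with h | h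
  · rcases eq_or_lt_of_le hp with h0 | h0
    · simp [← h0]; nlinarith [Real.rpow_nonneg ha q]
    rcases eq_or_lt_of_le hq with h0' | h0'
    · simp [← h0']; nlinarith [Real.rpow_nonneg ha p, Real.rpow_nonneg ha (p+0)]
    simp [← h, Real.zero_rpow h0.ne', Real.zero_rpow h0'.ne',
      Real.zero_rpow (by positivity : p + q ≠ 0)]
  · have hmul : a ^ (p + q) = a ^ p * a ^ q := Real.rpow_add h p q
    nlinarith


/-- Modification-error bounds for the modified Euler scheme (MES): the coefficients
`f̄_h(x) = f(x)/(1+h|f(x)|²)`, `ḡ_h(x) = g(x)/(1+h|f(x)|²)` differ from `f`, `g`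
by `O(h)` with polynomial weights.
`ℝ^{d×m}` is modelled as `EuclideanSpace ℝ (Fin d × Fin m)` (Frobenius norm). -/
theorem mes_modification_error
    (L r ρ : ℝ) (hL : 0 < L) (hr : 0 ≤ r) (hρ0 : 0 ≤ ρ) (hρr : ρ ≤ r) :
    ∃ C : ℝ, 0 < C ∧ ∀ (d m : ℕ), 1 ≤ d → 1 ≤ m →
      ∀ (f : EuclideanSpace ℝ (Fin d) → EuclideanSpace ℝ (Fin d))
        (g : EuclideanSpace ℝ (Fin d) → EuclideanSpace ℝ (Fin d × Fin m)),
      (∀ x, ‖f x‖ ≤ L * (1 + ‖x‖ ^ (2 * r + 1))) →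
      (∀ x, ‖g x‖ ≤ L * (1 + ‖x‖ ^ ρ)) →
      ∀ h : ℝ, 0 < h → ∀ x : EuclideanSpace ℝ (Fin d),
        ‖(1 + h * ‖f x‖ ^ 2)⁻¹ • f x - f x‖ ≤ C * h * (1 + ‖x‖ ^ (6 * r + 3)) ∧
        ‖(1 + h * ‖f x‖ ^ 2)⁻¹ • g x - g x‖ ≤ C * h * (1 + ‖x‖ ^ (4 * r + ρ + 2)) := by
  refine ⟨4 * L ^ 3, by positivity, ?_⟩
  intro d m hd hm f g hf hg h hh x
  set a := ‖x‖ with ha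
  have ha0 : 0 ≤ a := norm_nonneg x
  set p : ℝ := 2 * r + 1 with hpdef
  have hp0 : 0 ≤ p := by positivity
  set F := ‖f x‖ with hF
  have hF0 : 0 ≤ F := norm_nonneg _
  set s := h * F ^ 2 with hs
  have hs0 : 0 ≤ s := by positivity
  have h1s : 0 < 1 + s := by positivity
  -- the scalar-error bound
  have key : ∀ (E : Type) [NormedAddCommGroup E] [NormedSpace ℝ E] (v : E),
      ‖(1 + s)⁻¹ • v - v‖ ≤ s * ‖v‖ := by
    intro E _ _ v
    have heq : (1 + s)⁻¹ • v - v = ((1 + s)⁻¹ - 1) • v := by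
      rw [sub_smul, one_smul]
    rw [heq, norm_smul]
    have hinv : (1 + s) * (1 + s)⁻¹ = 1 := mul_inv_cancel₀ h1s.ne'
    have hinv0 : 0 ≤ (1 + s)⁻¹ := by positivity
    have habs : |(1 + s)⁻¹ - 1| = 1 - (1 + s)⁻¹ := by
      rw [abs_sub_comm, abs_of_nonneg]
      nlinarith
    rw [Real.norm_eq_abs, habs]
    have : 1 - (1 + s)⁻¹ ≤ s := by nlinarith
    exact mul_le_mul_of_nonneg_right this (norm_nonneg v)
  have hPF : F ≤ L * (1 + a ^ p) := hf x
  have hP0 : 0 ≤ 1 + a ^ p := by positivity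
  have hF3 : F ^ 3 ≤ L ^ 3 * (1 + a ^ p) ^ 3 := by
    calc F ^ 3 ≤ (L * (1 + a ^ p)) ^ 3 := pow_le_pow_left₀ hF0 hPF 3
    _ = L ^ 3 * (1 + a ^ p) ^ 3 := by ring
  have hm1 := mes_aux_mul a p p ha0 hp0 hp0
  have hm2 := mes_aux_mul a (p + p) p ha0 (by positivity) hp0
  have hm3 := mes_aux_mul a (p + p) ρ ha0 (by positivity) hρ0
  have hQ0 : 0 ≤ 1 + a ^ (p + p) := by positivity
  have hP3 : (1 + a ^ p) ^ 3 ≤ 4 * (1 + a ^ (p + p + p)) := by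
    have : (1 + a ^ p) ^ 3 = (1 + a ^ p) * (1 + a ^ p) * (1 + a ^ p) := by ring
    rw [this]
    calc (1 + a ^ p) * (1 + a ^ p) * (1 + a ^ p)
        ≤ 2 * (1 + a ^ (p + p)) * (1 + a ^ p) :=
          mul_le_mul_of_nonneg_right hm1 hP0
      _ ≤ 2 * (2 * (1 + a ^ (p + p + p))) := by nlinarith
      _ = 4 * (1 + a ^ (p + p + p)) := by ring
  have hexp1 : p + p + p = 6 * r + 3 := by rw [hpdef]; ring
  have hexp2 : p + p + ρ = 4 * r + ρ + 2 := by rw [hpdef]; ring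
  constructor
  · calc ‖(1 + s)⁻¹ • f x - f x‖ ≤ s * F := key _ (f x)
      _ = h * F ^ 3 := by ring
      _ ≤ h * (L ^ 3 * (1 + a ^ p) ^ 3) := mul_le_mul_of_nonneg_left hF3 hh.le
      _ ≤ h * (L ^ 3 * (4 * (1 + a ^ (p + p + p)))) := by
        have := mul_le_mul_of_nonneg_left hP3 (pow_pos hL 3).le
        exact mul_le_mul_of_nonneg_left this hh.le
      _ = 4 * L ^ 3 * h * (1 + a ^ (6 * r + 3)) := by rw [hexp1]; ring
  · have hG : ‖g x‖ ≤ L * (1 + a ^ ρ) := hg x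
    have hG0 : 0 ≤ ‖g x‖ := norm_nonneg _
    have hρP : 0 ≤ 1 + a ^ ρ := by positivity
    have hF2 : F ^ 2 ≤ L ^ 2 * (1 + a ^ p) ^ 2 := by
      calc F ^ 2 ≤ (L * (1 + a ^ p)) ^ 2 := pow_le_pow_left₀ hF0 hPF 2
      _ = L ^ 2 * (1 + a ^ p) ^ 2 := by ring
    have hP2ρ : (1 + a ^ p) ^ 2 * (1 + a ^ ρ) ≤ 4 * (1 + a ^ (p + p + ρ)) := by
      calc (1 + a ^ p) ^ 2 * (1 + a ^ ρ) = (1 + a ^ p) * (1 + a ^ p) * (1 + a ^ ρ) := by ring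
        _ ≤ 2 * (1 + a ^ (p + p)) * (1 + a ^ ρ) := mul_le_mul_of_nonneg_right hm1 hρP
        _ ≤ 2 * (2 * (1 + a ^ (p + p + ρ))) := by nlinarith
        _ = 4 * (1 + a ^ (p + p + ρ)) := by ring
    calc ‖(1 + s)⁻¹ • g x - g x‖ ≤ s * ‖g x‖ := key _ (g x)
      _ = h * (F ^ 2 * ‖g x‖) := by ring
      _ ≤ h * (L ^ 2 * (1 + a ^ p) ^ 2 * (L * (1 + a ^ ρ))) := by
        have h2 : F ^ 2 * ‖g x‖ ≤ L ^ 2 * (1 + a ^ p) ^ 2 * (L * (1 + a ^ ρ)) :=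
          mul_le_mul hF2 hG hG0 (by positivity)
        exact mul_le_mul_of_nonneg_left h2 hh.le
      _ = h * (L ^ 3 * ((1 + a ^ p) ^ 2 * (1 + a ^ ρ))) := by ring
      _ ≤ h * (L ^ 3 * (4 * (1 + a ^ (p + p + ρ)))) := by
        have := mul_le_mul_of_nonneg_left hP2ρ (pow_pos hL 3).le
        exact mul_le_mul_of_nonneg_left this hh.le
      _ = 4 * L ^ 3 * h * (1 + a ^ (4 * r + ρ + 2)) := by rw [hexp2]; ring
end

section
/- Let d, m ≥ 1, L > 0, ρ ≥ 0, and suppose g : ℝ^d → ℝ^{d×m} satisfies ‖g(x)‖ ≤ L(1+|x|^{ρ}) for all x ∈ ℝ^d. Define the balanced-scheme diffusion ḡ_h(x) ∈ ℝ^{d×m} entrywise by (ḡ_h(x))_{ij} = h^{−1/2} tanh(h^{1/2} g_{ij}(x)). Then for all h > 0 and all x ∈ ℝ^d, ‖ḡ_h(x) − g(x)‖ ≤ (h/3)‖g(x)‖³ ≤ C h(1+|x|^{3ρ}), where C is a constant depending only on L. -/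
theorem hasDerivAt_tanh (x : ℝ) : HasDerivAt Real.tanh (1 - Real.tanh x ^ 2) x := by
  have hc := Real.cosh_pos x
  have heq : Real.tanh = fun y => Real.sinh y / Real.cosh y :=
    funext Real.tanh_eq_sinh_div_cosh
  have h1 : HasDerivAt Real.tanh ((Real.cosh x * Real.cosh x - Real.sinh x * Real.sinh x) / Real.cosh x ^ 2) x := by
    rw [heq]; exact (Real.hasDerivAt_sinh x).div (Real.hasDerivAt_cosh x) hc.ne'
  convert h1 using 1
  have := Real.cosh_sq_sub_sinh_sq x
  rw [Real.tanh_eq_sinh_div_cosh]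
  field_simp


theorem tanh_sq_le_one (x : ℝ) : Real.tanh x ^ 2 ≤ 1 := by
  have hc := Real.cosh_pos x
  rw [Real.tanh_eq_sinh_div_cosh, div_pow, div_le_one (by positivity)]
  nlinarith [Real.cosh_sq_sub_sinh_sq x]

theorem tanh_abs_le (x : ℝ) : |Real.tanh x| ≤ |x| := by
  have hmono : Monotone (fun t => t - Real.tanh t) := by
    apply monotone_of_deriv_nonneg
    · exact differentiable_id.sub fun t => (hasDerivAt_tanh t).differentiableAt
    · intro t
      rw [deriv_fun_sub differentiableAt_fun_id (hasDerivAt_tanh t).differentiableAt,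
        deriv_id'', (hasDerivAt_tanh t).deriv]
      show (0:ℝ) ≤ 1 - (1 - Real.tanh t ^ 2)
      nlinarith [tanh_sq_le_one t]
  have hmono2 : Monotone Real.tanh := by
    apply monotone_of_deriv_nonneg (fun t => (hasDerivAt_tanh t).differentiableAt)
    intro t
    rw [(hasDerivAt_tanh t).deriv]
    nlinarith [tanh_sq_le_one t]
  rcases le_total 0 x with hx | hx
  · have h1 : (0:ℝ) - Real.tanh 0 ≤ x - Real.tanh x := hmono hx
    have h2 : Real.tanh 0 ≤ Real.tanh x := hmono2 hx
    simp [Real.tanh_zero] at h1 h2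
    rw [abs_of_nonneg h2, abs_of_nonneg hx]; linarith
  · have h1 : x - Real.tanh x ≤ (0:ℝ) - Real.tanh 0 := hmono hx
    have h2 : Real.tanh x ≤ Real.tanh 0 := hmono2 hx
    simp [Real.tanh_zero] at h1 h2
    rw [abs_of_nonpos h2, abs_of_nonpos hx]; linarith

theorem tanh_sub_le (x : ℝ) : |Real.tanh x - x| ≤ |x| ^ 3 / 3 := by
  have hmono : Monotone (fun t => t ^ 3 / 3 - (t - Real.tanh t)) := by
    apply monotone_of_deriv_nonneg
    · exact (differentiable_id.pow 3).div_const 3 |>.sub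
        (differentiable_id.sub fun t => (hasDerivAt_tanh t).differentiableAt)
    · intro t
      have hd : HasDerivAt (fun t : ℝ => t ^ 3 / 3 - (t - Real.tanh t))
          (3 * t ^ 2 / 3 - (1 - (1 - Real.tanh t ^ 2))) t := by
        exact (((hasDerivAt_pow 3 t).div_const 3).sub
          ((hasDerivAt_id t).sub (hasDerivAt_tanh t)))
      rw [hd.deriv]
      have := tanh_abs_le t
      nlinarith [sq_abs t, sq_abs (Real.tanh t), sq_nonneg (|t| - |Real.tanh t|), abs_nonneg t, abs_nonneg (Real.tanh t)]
  have hmono2 : Monotone (fun t => t - Real.tanh t) := by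
    apply monotone_of_deriv_nonneg
    · exact differentiable_id.sub fun t => (hasDerivAt_tanh t).differentiableAt
    · intro t
      rw [deriv_fun_sub differentiableAt_fun_id (hasDerivAt_tanh t).differentiableAt,
        deriv_id'', (hasDerivAt_tanh t).deriv]
      show (0:ℝ) ≤ 1 - (1 - Real.tanh t ^ 2)
      nlinarith [tanh_sq_le_one t]
  rcases le_total 0 x with hx | hx
  · have h1 := hmono hx
    have h2 := hmono2 hx
    simp [Real.tanh_zero] at h1 h2
    rw [abs_of_nonpos (by linarith), abs_of_nonneg hx]; linarith
  · have h1 := hmono hx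
    have h2 := hmono2 hx
    simp [Real.tanh_zero] at h1 h2
    rw [abs_of_nonneg (by linarith), abs_of_nonpos hx]
    nlinarith [abs_nonneg x]

/-- Modification-error bound for the diffusion of the balanced scheme (BS):
the entrywise tamed diffusion `(ḡ_h(x))_{ij} = h^{−1/2} tanh(h^{1/2} g_{ij}(x))`
satisfies `‖ḡ_h(x) − g(x)‖ ≤ (h/3)‖g(x)‖³ ≤ C h (1+|x|^{3ρ})`, with `C`
depending only on `L`.  `ℝ^{d×m}` is modelled as
`EuclideanSpace ℝ (Fin d × Fin m)`, whose norm is the Frobenius norm. -/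
theorem bs_diffusion_modification_error (L : ℝ) (hL : 0 < L) :
    ∃ C : ℝ, 0 < C ∧ ∀ (d m : ℕ), 1 ≤ d → 1 ≤ m → ∀ (ρ : ℝ), 0 ≤ ρ →
      ∀ (g : EuclideanSpace ℝ (Fin d) → EuclideanSpace ℝ (Fin d × Fin m)),
      (∀ x, ‖g x‖ ≤ L * (1 + ‖x‖ ^ ρ)) →
      ∀ h : ℝ, 0 < h → ∀ x : EuclideanSpace ℝ (Fin d),
        ‖(WithLp.equiv 2 (Fin d × Fin m → ℝ)).symm
              (fun ij => (Real.sqrt h)⁻¹ * Real.tanh (Real.sqrt h * g x ij)) - g x‖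
            ≤ h / 3 * ‖g x‖ ^ 3 ∧
        h / 3 * ‖g x‖ ^ 3 ≤ C * h * (1 + ‖x‖ ^ (3 * ρ)) := by
  refine ⟨4 * L ^ 3 / 3, by positivity, ?_⟩
  intro d m hd hm ρ hρ g hg h hh x
  set s := Real.sqrt h with hs
  have hs0 : 0 < s := Real.sqrt_pos.mpr hh
  have hs2 : s ^ 2 = h := Real.sq_sqrt hh.le
  constructor
  · -- entrywise bound
    have hz : ∀ ij : Fin d × Fin m, |s⁻¹ * Real.tanh (s * g x ij) - g x ij| ≤ h / 3 * |g x ij| ^ 3 := by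
      intro ij
      have ht := tanh_sub_le (s * g x ij)
      have h2 : s⁻¹ * Real.tanh (s * g x ij) - g x ij
          = s⁻¹ * (Real.tanh (s * g x ij) - s * g x ij) := by field_simp
      rw [h2, abs_mul, abs_inv, abs_of_pos hs0]
      have h3 : |s * g x ij| ^ 3 = s ^ 3 * |g x ij| ^ 3 := by
        rw [abs_mul, abs_of_pos hs0, mul_pow]
      calc s⁻¹ * |Real.tanh (s * g x ij) - s * g x ij|
          ≤ s⁻¹ * (|s * g x ij| ^ 3 / 3) := by gcongr
        _ = h / 3 * |g x ij| ^ 3 := by rw [h3, ← hs2]; field_simp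
    set T := ∑ ij : Fin d × Fin m, (g x ij) ^ 2 with hT
    have hT0 : 0 ≤ T := Finset.sum_nonneg fun ij _ => sq_nonneg _
    have hS : ‖g x‖ = Real.sqrt T := by
      rw [EuclideanSpace.norm_eq, hT]
      congr 1; exact Finset.sum_congr rfl fun ij _ => by rw [Real.norm_eq_abs, sq_abs]
    rw [EuclideanSpace.norm_eq]
    have hterm : ∀ ij : Fin d × Fin m,
        ‖((WithLp.equiv 2 (Fin d × Fin m → ℝ)).symm
          (fun ij => s⁻¹ * Real.tanh (s * g x ij)) - g x) ij‖ ^ 2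
        ≤ (h / 3) ^ 2 * ((g x ij) ^ 2) ^ 3 := by
      intro ij
      have happ : ((WithLp.equiv 2 (Fin d × Fin m → ℝ)).symm
          (fun ij => s⁻¹ * Real.tanh (s * g x ij)) - g x) ij
          = s⁻¹ * Real.tanh (s * g x ij) - g x ij := by
        rw [PiLp.sub_apply, WithLp.equiv_symm_apply, PiLp.toLp_apply]
      rw [happ, Real.norm_eq_abs]
      calc |s⁻¹ * Real.tanh (s * g x ij) - g x ij| ^ 2
          ≤ (h / 3 * |g x ij| ^ 3) ^ 2 := pow_le_pow_left₀ (abs_nonneg _) (hz ij) 2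
        _ = (h / 3) ^ 2 * ((g x ij) ^ 2) ^ 3 := by
            rw [mul_pow, show (|g x ij| ^ 3) ^ 2 = (|g x ij| ^ 2) ^ 3 from by ring, sq_abs]
    have hsum : ∑ ij : Fin d × Fin m, ((g x ij) ^ 2) ^ 3 ≤ T ^ 3 := by
      calc ∑ ij : Fin d × Fin m, ((g x ij) ^ 2) ^ 3
          ≤ ∑ ij : Fin d × Fin m, (g x ij) ^ 2 * T ^ 2 := by
            refine Finset.sum_le_sum fun ij _ => ?_
            have hle : (g x ij) ^ 2 ≤ T :=
              Finset.single_le_sum (fun kl _ => sq_nonneg (g x kl)) (Finset.mem_univ ij)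
            calc ((g x ij) ^ 2) ^ 3 = (g x ij) ^ 2 * ((g x ij) ^ 2) ^ 2 := by ring
              _ ≤ (g x ij) ^ 2 * T ^ 2 :=
                  mul_le_mul_of_nonneg_left (pow_le_pow_left₀ (sq_nonneg _) hle 2) (sq_nonneg _)
        _ = T * T ^ 2 := by rw [← Finset.sum_mul]
        _ = T ^ 3 := by ring
    have hSle : Real.sqrt (∑ ij : Fin d × Fin m, ‖((WithLp.equiv 2 (Fin d × Fin m → ℝ)).symm
        (fun ij => s⁻¹ * Real.tanh (s * g x ij)) - g x) ij‖ ^ 2)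
        ≤ Real.sqrt ((h / 3) ^ 2 * T ^ 3) := by
      apply Real.sqrt_le_sqrt
      calc ∑ ij : Fin d × Fin m, ‖((WithLp.equiv 2 (Fin d × Fin m → ℝ)).symm
            (fun ij => s⁻¹ * Real.tanh (s * g x ij)) - g x) ij‖ ^ 2
          ≤ ∑ ij : Fin d × Fin m, (h / 3) ^ 2 * ((g x ij) ^ 2) ^ 3 :=
            Finset.sum_le_sum fun ij _ => hterm ij
        _ = (h / 3) ^ 2 * ∑ ij : Fin d × Fin m, ((g x ij) ^ 2) ^ 3 := by rw [Finset.mul_sum]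
        _ ≤ (h / 3) ^ 2 * T ^ 3 := mul_le_mul_of_nonneg_left hsum (by positivity)
    refine hSle.trans_eq ?_
    rw [hS, Real.sqrt_mul (sq_nonneg _), Real.sqrt_sq (by positivity : (0:ℝ) ≤ h / 3),
      show T ^ 3 = T ^ 2 * T from by ring, Real.sqrt_mul (sq_nonneg T), Real.sqrt_sq hT0,
      show Real.sqrt T ^ 3 = T * Real.sqrt T from by
        rw [pow_succ, Real.sq_sqrt hT0]]
  · -- polynomial bound
    have hb := hg x
    have hnn : (0:ℝ) ≤ ‖x‖ ^ ρ := Real.rpow_nonneg (norm_nonneg x) ρ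
    have hcube : ‖g x‖ ^ 3 ≤ L ^ 3 * (1 + ‖x‖ ^ ρ) ^ 3 := by
      rw [← mul_pow]
      exact pow_le_pow_left₀ (norm_nonneg _) hb 3
    have hr3 : (‖x‖ ^ ρ) ^ 3 = ‖x‖ ^ (3 * ρ) := by
      rw [← Real.rpow_natCast (‖x‖ ^ ρ) 3, ← Real.rpow_mul (norm_nonneg x)]
      norm_num [mul_comm]
    have hfour : (1 + ‖x‖ ^ ρ) ^ 3 ≤ 4 * (1 + ‖x‖ ^ (3 * ρ)) := by
      rw [← hr3]
      nlinarith [sq_nonneg (1 - ‖x‖ ^ ρ), sq_nonneg (‖x‖ ^ ρ)]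
    have hmain : ‖g x‖ ^ 3 ≤ L ^ 3 * (4 * (1 + ‖x‖ ^ (3 * ρ))) :=
      hcube.trans (mul_le_mul_of_nonneg_left hfour (by positivity))
    calc h / 3 * ‖g x‖ ^ 3 ≤ h / 3 * (L ^ 3 * (4 * (1 + ‖x‖ ^ (3 * ρ)))) :=
          mul_le_mul_of_nonneg_left hmain (by positivity)
      _ = 4 * L ^ 3 / 3 * h * (1 + ‖x‖ ^ (3 * ρ)) := by ring
end

section
/- Let d, m ≥ 1, L > 0, r ≥ 0, 0 ≤ ρ ≤ r, q ≥ 1, κ > 0, and suppose f : ℝ^d → ℝ^d satisfies |f(x)| ≤ L(1+|x|^{2r+1}) and g : ℝ^d → ℝ^{d×m} satisfies ‖g(x)‖ ≤ L(1+|x|^ρ) for all x ∈ ℝ^d. Let (Ω,𝓕,ℙ) be a probability space, h ∈ (0,1], and let ξ : Ω → ℝ^m be a random vector with (E[|ξ|^{2q}])^{1/(2q)} ≤ κ h^{1/2}. Define the random balanced-type coefficients f̄_h(x)(ω) = f(x)/(1+h|f(x)|+|g(x)ξ(ω)|) and ḡ_h(x)(ω) = g(x)/(1+h|f(x)|+|g(x)ξ(ω)|).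 Then there exists a constant C depending only on L, r, ρ, q and κ such that for all x ∈ ℝ^d, (E[|f̄_h(x) − f(x)|^{2q}])^{1/(2q)} ≤ C h^{1/2}(1+|x|^{4r+2}) and (E[‖ḡ_h(x) − g(x)‖^{2q}])^{1/(2q)} ≤ C h^{1/2}(1+|x|^{2r+ρ+1}). -/
open MeasureTheory ENNReal

/-- The matrix-vector product, with `ℝ^{d×m}` modelled as
`EuclideanSpace ℝ (Fin d × Fin m)` (whose norm is the Frobenius norm). -/
noncomputable def matMulVec {d m : ℕ} (A : EuclideanSpace ℝ (Fin d × Fin m))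
    (v : EuclideanSpace ℝ (Fin m)) : EuclideanSpace ℝ (Fin d) :=
  (WithLp.equiv 2 (Fin d → ℝ)).symm fun i => ∑ j, A (i, j) * v j

lemma rpow_le_one_add_rpow_s14 {t a c : ℝ} (ht : 0 ≤ t) (ha : 0 ≤ a) (hac : a ≤ c) :
    t ^ a ≤ 1 + t ^ c := by
  rcases le_or_gt t 1 with h1 | h1
  · have h2 := Real.rpow_le_one ht h1 ha
    have h3 := Real.rpow_nonneg ht c
    linarith
  · have h2 := Real.rpow_le_rpow_of_exponent_le h1.le hac
    linarith

lemma one_add_rpow_mul {t a b : ℝ} (ht : 0 ≤ t) (ha : 0 ≤ a) (hb : 0 ≤ b) :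
    (1 + t ^ a) * (1 + t ^ b) ≤ 4 * (1 + t ^ (a + b)) := by
  have hab : t ^ (a + b) = t ^ a * t ^ b := Real.rpow_add_of_nonneg ht ha hb
  have h1 : t ^ a ≤ 1 + t ^ (a + b) := rpow_le_one_add_rpow_s14 ht ha (by linarith)
  have h2 : t ^ b ≤ 1 + t ^ (a + b) := rpow_le_one_add_rpow_s14 ht hb (by linarith)
  have h3 : 0 ≤ t ^ (a + b) := Real.rpow_nonneg ht _
  nlinarith

lemma norm_matMulVec_le {d m : ℕ} (A : EuclideanSpace ℝ (Fin d × Fin m))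
    (v : EuclideanSpace ℝ (Fin m)) : ‖matMulVec A v‖ ≤ ‖A‖ * ‖v‖ := by
  rw [EuclideanSpace.norm_eq, EuclideanSpace.norm_eq, EuclideanSpace.norm_eq,
    ← Real.sqrt_mul (by positivity)]
  simp only [Real.norm_eq_abs, sq_abs]
  apply Real.sqrt_le_sqrt
  have key : ∀ i : Fin d, (matMulVec A v i) ^ 2 ≤ (∑ j, A (i, j) ^ 2) * (∑ j, v j ^ 2) := by
    intro i
    have : matMulVec A v i = ∑ j, A (i, j) * v j := rfl
    rw [this]
    exact Finset.sum_mul_sq_le_sq_mul_sq _ _ _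
  calc ∑ i, matMulVec A v i ^ 2 ≤ ∑ i, (∑ j, A (i, j) ^ 2) * (∑ j, v j ^ 2) :=
        Finset.sum_le_sum fun i _ => key i
    _ = (∑ p : Fin d × Fin m, A p ^ 2) * ∑ j, v j ^ 2 := by
        rw [← Finset.sum_mul, Fintype.sum_prod_type]

lemma smul_sub_norm_le {E : Type*} [NormedAddCommGroup E] [NormedSpace ℝ E]
    {c : ℝ} (hc : 1 ≤ c) (w : E) : ‖c⁻¹ • w - w‖ ≤ (c - 1) * ‖w‖ := by
  have hc0 : 0 < c := lt_of_lt_of_le one_pos hc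
  have : c⁻¹ • w - w = (c⁻¹ - 1) • w := by rw [sub_smul, one_smul]
  rw [this, norm_smul, Real.norm_eq_abs]
  have hinv : c⁻¹ ≤ 1 := inv_le_one_of_one_le₀ hc
  have habs : |c⁻¹ - 1| = 1 - c⁻¹ := by rw [abs_of_nonpos (by linarith)]; ring
  rw [habs]
  have hci : c * c⁻¹ = 1 := mul_inv_cancel₀ hc0.ne'
  have : 1 - c⁻¹ ≤ c - 1 := by nlinarith [sq_nonneg (c - 1)]
  exact mul_le_mul_of_nonneg_right this (norm_nonneg w)

lemma eLpNorm_le_of_bound {Ω : Type} [MeasurableSpace Ω] {P : Measure Ω}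
    [IsProbabilityMeasure P] {m : ℕ} {ξ : Ω → EuclideanSpace ℝ (Fin m)}
    (hξ : Measurable ξ) {p : ℝ≥0∞} (hp : 1 ≤ p) {K : ℝ}
    (hK : 0 ≤ K) (hξp : eLpNorm ξ p P ≤ ENNReal.ofReal K)
    {E : Type*} [NormedAddCommGroup E] {F : Ω → E} {a b : ℝ}
    (ha : 0 ≤ a) (hb : 0 ≤ b) (hF : ∀ ω, ‖F ω‖ ≤ a + b * ‖ξ ω‖) :
    eLpNorm F p P ≤ ENNReal.ofReal (a + b * K) := by
  have hp0 : p ≠ 0 := by rintro rfl; simp at hp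
  calc eLpNorm F p P ≤ eLpNorm (fun ω => a + b * ‖ξ ω‖) p P := eLpNorm_mono_real hF
    _ ≤ eLpNorm (fun _ : Ω => a) p P + eLpNorm (fun ω => b * ‖ξ ω‖) p P := by
        have he : (fun ω => a + b * ‖ξ ω‖) = (fun _ : Ω => a) + (fun ω => b * ‖ξ ω‖) := rfl
        rw [he]
        exact eLpNorm_add_le aestronglyMeasurable_const
          ((hξ.norm.const_mul b).aestronglyMeasurable) hp
    _ ≤ ENNReal.ofReal a + ENNReal.ofReal b * ENNReal.ofReal K := by
        gcongr
        · rw [eLpNorm_const a hp0 (IsProbabilityMeasure.ne_zero P)]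
          simp [Real.enorm_eq_ofReal ha]
        · have he : (fun ω => b * ‖ξ ω‖) = b • (fun ω => ‖ξ ω‖) := rfl
          rw [he, eLpNorm_const_smul, eLpNorm_norm]
          exact mul_le_mul' (le_of_eq (Real.enorm_eq_ofReal hb)) hξp
    _ = ENNReal.ofReal (a + b * K) := by
        rw [← ENNReal.ofReal_mul hb, ← ENNReal.ofReal_add ha (mul_nonneg hb hK)]

set_option maxHeartbeats 1000000 in
/-- `L^{2q}` modification-error bounds for the balanced-type scheme (BTS):
the random coefficients `f̄_h(x)(ω) = f(x)/(1+h|f(x)|+|g(x)ξ(ω)|)` and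
`ḡ_h(x)(ω) = g(x)/(1+h|f(x)|+|g(x)ξ(ω)|)` differ from `f`, `g` by
`O(h^{1/2})` in `L^{2q}`, with polynomial weights. -/
theorem bts_modification_error
    (L r ρ q κ : ℝ) (hL : 0 < L) (hr : 0 ≤ r) (hρ0 : 0 ≤ ρ) (hρr : ρ ≤ r)
    (hq : 1 ≤ q) (hκ : 0 < κ) :
    ∃ C : ℝ, 0 < C ∧ ∀ (d m : ℕ), 1 ≤ d → 1 ≤ m →
      ∀ (Ω : Type) [MeasurableSpace Ω] (P : Measure Ω), IsProbabilityMeasure P →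
      ∀ h : ℝ, 0 < h → h ≤ 1 →
      ∀ (ξ : Ω → EuclideanSpace ℝ (Fin m)), Measurable ξ →
        eLpNorm ξ (ENNReal.ofReal (2 * q)) P ≤ ENNReal.ofReal (κ * h ^ ((1 : ℝ) / 2)) →
      ∀ (f : EuclideanSpace ℝ (Fin d) → EuclideanSpace ℝ (Fin d))
        (g : EuclideanSpace ℝ (Fin d) → EuclideanSpace ℝ (Fin d × Fin m)),
      (∀ x, ‖f x‖ ≤ L * (1 + ‖x‖ ^ (2 * r + 1))) →
      (∀ x, ‖g x‖ ≤ L * (1 + ‖x‖ ^ ρ)) →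
      ∀ x : EuclideanSpace ℝ (Fin d),
        eLpNorm (fun ω =>
            (1 + h * ‖f x‖ + ‖matMulVec (g x) (ξ ω)‖)⁻¹ • f x - f x)
            (ENNReal.ofReal (2 * q)) P
          ≤ ENNReal.ofReal (C * h ^ ((1 : ℝ) / 2) * (1 + ‖x‖ ^ (4 * r + 2))) ∧
        eLpNorm (fun ω =>
            (1 + h * ‖f x‖ + ‖matMulVec (g x) (ξ ω)‖)⁻¹ • g x - g x)
            (ENNReal.ofReal (2 * q)) P
          ≤ ENNReal.ofReal (C * h ^ ((1 : ℝ) / 2) * (1 + ‖x‖ ^ (2 * r + ρ + 1))) := by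
  refine ⟨4 * L ^ 2 + 8 * κ * L ^ 2, by positivity, ?_⟩
  intro d m _ _ Ω _ P hPprob h hh0 hh1 ξ hξ hξp f g hf hg x
  haveI := hPprob
  set C : ℝ := 4 * L ^ 2 + 8 * κ * L ^ 2 with hC
  set s : ℝ := h ^ ((1 : ℝ) / 2) with hs
  have hs0 : 0 < s := Real.rpow_pos_of_pos hh0 _
  have hs1 : s ≤ 1 := Real.rpow_le_one hh0.le hh1 (by norm_num)
  have hhs : h ≤ s := by
    have := Real.rpow_le_rpow_of_exponent_ge hh0 hh1 (by norm_num : (1:ℝ)/2 ≤ 1)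
    rwa [Real.rpow_one] at this
  have hp : (1 : ℝ≥0∞) ≤ ENNReal.ofReal (2 * q) := by
    rw [ENNReal.one_le_ofReal]; linarith
  set t : ℝ := ‖x‖ with ht
  have ht0 : 0 ≤ t := norm_nonneg x
  set F : ℝ := ‖f x‖ with hFdef
  set G : ℝ := ‖g x‖ with hGdef
  have hF0 : 0 ≤ F := norm_nonneg _
  have hG0 : 0 ≤ G := norm_nonneg _
  have hFb : F ≤ L * (1 + t ^ (2 * r + 1)) := hf x
  have hGb : G ≤ L * (1 + t ^ ρ) := hg x
  have hA0 : 0 ≤ t ^ (2 * r + 1) := Real.rpow_nonneg ht0 _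
  have hB0 : 0 ≤ t ^ ρ := Real.rpow_nonneg ht0 _
  have hU0 : 0 ≤ t ^ (4 * r + 2) := Real.rpow_nonneg ht0 _
  have hV0 : 0 ≤ t ^ (2 * r + ρ + 1) := Real.rpow_nonneg ht0 _
  -- product bounds
  have P1 : (1 + t ^ (2 * r + 1)) * (1 + t ^ (2 * r + 1)) ≤ 4 * (1 + t ^ (4 * r + 2)) := by
    have := one_add_rpow_mul ht0 (by linarith : (0:ℝ) ≤ 2 * r + 1) (by linarith : (0:ℝ) ≤ 2 * r + 1)
    rwa [show (2 * r + 1) + (2 * r + 1) = 4 * r + 2 by ring] at this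
  have P2 : (1 + t ^ ρ) * (1 + t ^ (2 * r + 1)) ≤ 8 * (1 + t ^ (4 * r + 2)) := by
    have h1 := one_add_rpow_mul ht0 hρ0 (by linarith : (0:ℝ) ≤ 2 * r + 1)
    have h2 : t ^ (ρ + (2 * r + 1)) ≤ 1 + t ^ (4 * r + 2) :=
      rpow_le_one_add_rpow_s14 ht0 (by linarith) (by linarith)
    linarith
  have P3 : (1 + t ^ (2 * r + 1)) * (1 + t ^ ρ) ≤ 4 * (1 + t ^ (2 * r + ρ + 1)) := by
    have := one_add_rpow_mul ht0 (by linarith : (0:ℝ) ≤ 2 * r + 1) hρ0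
    rwa [show (2 * r + 1) + ρ = 2 * r + ρ + 1 by ring] at this
  have P4 : (1 + t ^ ρ) * (1 + t ^ ρ) ≤ 8 * (1 + t ^ (2 * r + ρ + 1)) := by
    have h1 := one_add_rpow_mul ht0 hρ0 hρ0
    have h2 : t ^ (ρ + ρ) ≤ 1 + t ^ (2 * r + ρ + 1) :=
      rpow_le_one_add_rpow_s14 ht0 (by linarith) (by linarith)
    linarith
  -- pointwise bounds
  have hden : ∀ ω, (1 : ℝ) ≤ 1 + h * F + ‖matMulVec (g x) (ξ ω)‖ := by
    intro ω
    have h1 := norm_nonneg (matMulVec (g x) (ξ ω))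
    have h2 : 0 ≤ h * F := mul_nonneg hh0.le hF0
    linarith
  have hmv : ∀ ω, ‖matMulVec (g x) (ξ ω)‖ ≤ G * ‖ξ ω‖ := fun ω => norm_matMulVec_le _ _
  have hptf : ∀ ω, ‖(1 + h * F + ‖matMulVec (g x) (ξ ω)‖)⁻¹ • f x - f x‖
      ≤ h * F ^ 2 + (G * F) * ‖ξ ω‖ := by
    intro ω
    have h1 := smul_sub_norm_le (hden ω) (f x)
    have h4 := mul_le_mul_of_nonneg_right (hmv ω) hF0
    nlinarith [h1, h4]
  have hptg : ∀ ω, ‖(1 + h * F + ‖matMulVec (g x) (ξ ω)‖)⁻¹ • g x - g x‖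
      ≤ h * (F * G) + (G * G) * ‖ξ ω‖ := by
    intro ω
    have h1 := smul_sub_norm_le (hden ω) (g x)
    have h4 := mul_le_mul_of_nonneg_right (hmv ω) hG0
    nlinarith [h1, h4]
  have hK0 : 0 ≤ κ * s := by positivity
  constructor
  · calc eLpNorm _ (ENNReal.ofReal (2 * q)) P
        ≤ ENNReal.ofReal (h * F ^ 2 + (G * F) * (κ * s)) :=
          eLpNorm_le_of_bound hξ hp hK0 hξp (by positivity) (by positivity) hptf
      _ ≤ ENNReal.ofReal (C * s * (1 + t ^ (4 * r + 2))) := by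
          apply ENNReal.ofReal_le_ofReal
          have e1 : h * F ^ 2 ≤ s * (4 * L ^ 2 * (1 + t ^ (4 * r + 2))) := by
            have hF2 : F * F ≤ (L * (1 + t ^ (2 * r + 1))) * (L * (1 + t ^ (2 * r + 1))) :=
              mul_le_mul hFb hFb hF0 (by positivity)
            nlinarith [mul_le_mul_of_nonneg_left P1 (sq_nonneg L),
              mul_le_mul_of_nonneg_right hhs (mul_self_nonneg F)]
          have e2 : (G * F) * (κ * s) ≤ κ * s * (8 * L ^ 2 * (1 + t ^ (4 * r + 2))) := by
            have hGF : G * F ≤ (L * (1 + t ^ ρ)) * (L * (1 + t ^ (2 * r + 1))) :=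
              mul_le_mul hGb hFb hF0 (by positivity)
            nlinarith [mul_le_mul_of_nonneg_left P2 (sq_nonneg L)]
          rw [hC]; nlinarith [e1, e2]
  · calc eLpNorm _ (ENNReal.ofReal (2 * q)) P
        ≤ ENNReal.ofReal (h * (F * G) + (G * G) * (κ * s)) :=
          eLpNorm_le_of_bound hξ hp hK0 hξp (by positivity) (by positivity) hptg
      _ ≤ ENNReal.ofReal (C * s * (1 + t ^ (2 * r + ρ + 1))) := by
          apply ENNReal.ofReal_le_ofReal
          have e1 : h * (F * G) ≤ s * (4 * L ^ 2 * (1 + t ^ (2 * r + ρ + 1))) := by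
            have hFG : F * G ≤ (L * (1 + t ^ (2 * r + 1))) * (L * (1 + t ^ ρ)) :=
              mul_le_mul hFb hGb hG0 (by positivity)
            nlinarith [mul_le_mul_of_nonneg_left P3 (sq_nonneg L),
              mul_le_mul_of_nonneg_right hhs (mul_nonneg hF0 hG0)]
          have e2 : (G * G) * (κ * s) ≤ κ * s * (8 * L ^ 2 * (1 + t ^ (2 * r + ρ + 1))) := by
            have hGG : G * G ≤ (L * (1 + t ^ ρ)) * (L * (1 + t ^ ρ)) :=
              mul_le_mul hGb hGb hG0 (by positivity)
            nlinarith [mul_le_mul_of_nonneg_left P4 (sq_nonneg L)]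
          rw [hC]; nlinarith [e1, e2]
end

section
/- Let d ≥ 1 and let f : ℝ^d → ℝ^d be continuous and satisfy the one-sided Lipschitz condition ⟨x−y, f(x)−f(y)⟩ ≤ C|x−y|² for all x, y ∈ ℝ^d, for some C ∈ ℝ. Let h > 0 with hC < 1. Then for every z ∈ ℝ^d there exists a unique y ∈ ℝ^d such that y = z + h f(y); equivalently, the map x ↦ x − h f(x) is a bijection from ℝ^d onto ℝ^d. -/
open scoped RealInnerProductSpace Convolution
open Metric MeasureTheory Function Filter Topology

section BEAux

abbrev Euc (d : ℕ) := EuclideanSpace ℝ (Fin d)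

variable {d : ℕ}





theorem BE_antilip {m : ℝ} {F : Euc d → Euc d}
    (hmono : ∀ x y : Euc d, m * ‖x - y‖ ^ 2 ≤ ⟪x - y, F x - F y⟫) (x y : Euc d) :
    m * ‖x - y‖ ≤ ‖F x - F y‖ := by
  rcases eq_or_ne x y with rfl | hne
  · simp
  · have h1 : ⟪x - y, F x - F y⟫ ≤ ‖x - y‖ * ‖F x - F y‖ := real_inner_le_norm _ _
    have h2 := hmono x y
    have h3 : (0:ℝ) < ‖x - y‖ := by
      simpa [sub_eq_zero] using (norm_pos_iff.2 (sub_ne_zero.2 hne))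
    nlinarith

theorem BE_closed_range {m : ℝ} (hm : 0 < m) {F : Euc d → Euc d} (hF : Continuous F)
    (hmono : ∀ x y : Euc d, m * ‖x - y‖ ^ 2 ≤ ⟪x - y, F x - F y⟫) :
    IsClosed (Set.range F) := by
  have hal := BE_antilip hmono
  apply IsSeqClosed.isClosed
  intro u p hu hup
  choose y hy using hu
  have hc : CauchySeq (fun n => u n) := hup.cauchySeq
  have hyc : CauchySeq y := by
    rw [Metric.cauchySeq_iff] at hc ⊢
    intro ε hε
    obtain ⟨N, hN⟩ := hc (m * ε) (by positivity)
    refine ⟨N, fun a ha b hb => ?_⟩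
    have := hN a ha b hb
    have h1 : m * ‖y a - y b‖ ≤ ‖F (y a) - F (y b)‖ := hal _ _
    rw [dist_eq_norm] at this ⊢
    rw [← hy a, ← hy b] at this
    nlinarith [norm_nonneg (y a - y b)]
  obtain ⟨q, hq⟩ := cauchySeq_tendsto_of_complete hyc
  refine ⟨q, ?_⟩
  have : Tendsto (fun n => F (y n)) atTop (𝓝 (F q)) := (hF.tendsto q).comp hq
  simp only [hy] at this
  exact tendsto_nhds_unique this hup

theorem BE_deriv_mono {m : ℝ} {F : Euc d → Euc d}
    (hmono : ∀ x y : Euc d, m * ‖x - y‖ ^ 2 ≤ ⟪x - y, F x - F y⟫)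
    {x : Euc d} {D : Euc d →L[ℝ] Euc d} (hD : HasFDerivAt F D x) (v : Euc d) :
    m * ‖v‖ ^ 2 ≤ ⟪v, D v⟫ := by
  set ψ : ℝ → ℝ := fun t => ⟪v, F (x + t • v) - F x⟫ with hψ
  have hc : HasDerivAt (fun t : ℝ => x + t • v) v 0 := by
    simpa using ((hasDerivAt_id (0:ℝ)).smul_const v).const_add x
  have hD' : HasFDerivAt F D (x + (0:ℝ) • v) := by simpa using hD
  have hF1 : HasDerivAt (fun t : ℝ => F (x + t • v)) (D v) 0 := by
    simpa [Function.comp_def] using hD'.comp_hasDerivAt 0 hc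
  have hF2 : HasDerivAt (fun t : ℝ => F (x + t • v) - F x) (D v) 0 := hF1.sub_const _
  have hψd : HasDerivAt ψ ⟪v, D v⟫ 0 := by
    have := (innerSL ℝ v).hasFDerivAt.comp_hasDerivAt 0 hF2
    simpa [hψ, Function.comp_def] using this
  have hslope : Tendsto (slope ψ 0) (𝓝[>] (0:ℝ)) (𝓝 ⟪v, D v⟫) :=
    (hasDerivAt_iff_tendsto_slope.1 hψd).mono_left
      (nhdsWithin_mono _ (fun t ht => by simpa using ne_of_gt ht))
  refine ge_of_tendsto hslope ?_
  filter_upwards [self_mem_nhdsWithin] with t ht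
  have ht' : (0:ℝ) < t := ht
  have hmt := hmono (x + t • v) x
  have h1 : (x + t • v) - x = t • v := by abel
  rw [h1, real_inner_smul_left, norm_smul] at hmt
  have hψ0 : ψ 0 = 0 := by simp [hψ]
  have hst : slope ψ 0 t = ψ t / t := by simp [slope_def_field, hψ0]
  rw [hst, le_div_iff₀ ht']
  have : ‖t‖ = t := by rw [Real.norm_eq_abs, abs_of_pos ht']
  rw [this] at hmt
  nlinarith [hmt]

theorem BE_surjective_of_contDiff {m : ℝ} (hm : 0 < m) {F : Euc d → Euc d}
    (hF : ContDiff ℝ ((⊤ : ℕ∞) : WithTop ℕ∞) F)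
    (hmono : ∀ x y : Euc d, m * ‖x - y‖ ^ 2 ≤ ⟪x - y, F x - F y⟫) :
    Function.Surjective F := by
  have hopen : IsOpen (Set.range F) := by
    rw [isOpen_iff_mem_nhds]
    rintro _ ⟨x, rfl⟩
    have hs : HasStrictFDerivAt F (fderiv ℝ F x) x :=
      (hF.contDiffAt).hasStrictFDerivAt (by simp)
    have hker : ∀ v, fderiv ℝ F x v = 0 → v = 0 := by
      intro v hv
      have := BE_deriv_mono hmono hs.hasFDerivAt v
      rw [hv] at this
      simp only [inner_zero_right] at this
      have : ‖v‖ ^ 2 ≤ 0 := by nlinarith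
      have : ‖v‖ = 0 := by nlinarith [norm_nonneg v, sq_nonneg ‖v‖]
      simpa using this
    have hinj : Function.Injective (fderiv ℝ F x) :=
      (injective_iff_map_eq_zero ((fderiv ℝ F x) : Euc d →ₗ[ℝ] Euc d)).2 hker
    have hsurj : Function.Surjective (fderiv ℝ F x) :=
      LinearMap.injective_iff_surjective.mp hinj
    have hrange : LinearMap.range (fderiv ℝ F x : Euc d →ₗ[ℝ] Euc d) = ⊤ := LinearMap.range_eq_top.2 hsurj
    have hmap := hs.map_nhds_eq_of_surj hrange
    rw [← hmap]
    exact Filter.mem_map.2 (Filter.univ_mem' fun y => Set.mem_range_self y)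
  have hclosed : IsClosed (Set.range F) := BE_closed_range hm hF.continuous hmono
  have : Set.range F = Set.univ :=
    IsClopen.eq_univ ⟨hclosed, hopen⟩ ⟨F 0, Set.mem_range_self 0⟩
  exact Set.range_eq_univ.1 this






noncomputable def BEconv (φ : ContDiffBump (0 : Euc d)) (f : Euc d → Euc d) : Euc d → Euc d :=
  φ.normed volume ⋆[ContinuousLinearMap.lsmul ℝ ℝ, volume] f

theorem BE_integrable (φ : ContDiffBump (0 : Euc d)) {f : Euc d → Euc d} (hf : Continuous f)
    (x : Euc d) : Integrable (fun u => φ.normed volume u • f (x - u)) volume := by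
  apply Continuous.integrable_of_hasCompactSupport
  · exact (φ.continuous_normed).smul (hf.comp (continuous_const.sub continuous_id))
  · exact (φ.hasCompactSupport_normed).smul_right

theorem BE_conv_eq (φ : ContDiffBump (0 : Euc d)) (f : Euc d → Euc d) (x : Euc d) :
    BEconv φ f x = ∫ u, φ.normed volume u • f (x - u) := by
  simp [BEconv, convolution_def]

theorem BE_conv_contDiff (φ : ContDiffBump (0 : Euc d)) {f : Euc d → Euc d} (hf : Continuous f) :
    ContDiff ℝ ((⊤ : ℕ∞) : WithTop ℕ∞) (BEconv φ f) := by
  exact HasCompactSupport.contDiff_convolution_left (n := ⊤) (ContinuousLinearMap.lsmul ℝ ℝ) (φ.hasCompactSupport_normed (μ := volume))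
    (φ.contDiff_normed (μ := volume)) (hf.locallyIntegrable (μ := volume))

theorem BE_conv_mono (φ : ContDiffBump (0 : Euc d)) {f : Euc d → Euc d} (hf : Continuous f)
    {C : ℝ} (hmono : ∀ x y : Euc d, ⟪x - y, f x - f y⟫ ≤ C * ‖x - y‖ ^ 2) (x y : Euc d) :
    ⟪x - y, BEconv φ f x - BEconv φ f y⟫ ≤ C * ‖x - y‖ ^ 2 := by
  have Ix := BE_integrable φ hf x
  have Iy := BE_integrable φ hf y
  have hdiff : BEconv φ f x - BEconv φ f y
      = ∫ u, φ.normed volume u • (f (x - u) - f (y - u)) := by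
    rw [BE_conv_eq, BE_conv_eq, ← integral_sub Ix Iy]
    simp [smul_sub]
  have Ixy : Integrable (fun u => φ.normed volume u • (f (x - u) - f (y - u))) volume := by
    have := Ix.sub Iy
    simpa [smul_sub, Pi.sub_def] using this
  have key := ContinuousLinearMap.integral_comp_comm (innerSL ℝ (x - y)) Ixy
  simp only [innerSL_apply_apply] at key
  rw [hdiff, ← key]
  have hInt1 : Integrable (fun u => (innerSL ℝ (x - y))
      (φ.normed volume u • (f (x - u) - f (y - u)))) volume :=
    ContinuousLinearMap.integrable_comp _ Ixy
  have hInt2 : Integrable (fun u => φ.normed volume u * (C * ‖x - y‖ ^ 2)) volume :=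
    (φ.integrable_normed).mul_const _
  simp only [innerSL_apply_apply] at hInt1
  calc ∫ u, ⟪x - y, φ.normed volume u • (f (x - u) - f (y - u))⟫
      ≤ ∫ u, φ.normed volume u * (C * ‖x - y‖ ^ 2) := by
        apply integral_mono hInt1 hInt2
        intro u
        show ⟪x - y, φ.normed volume u • (f (x - u) - f (y - u))⟫
            ≤ φ.normed volume u * (C * ‖x - y‖ ^ 2)
        rw [real_inner_smul_right]
        apply mul_le_mul_of_nonneg_left _ (φ.nonneg_normed u)
        have := hmono (x - u) (y - u)
        have hxy : (x - u) - (y - u) = x - y := by abel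
        rwa [hxy] at this
    _ = C * ‖x - y‖ ^ 2 := by
        rw [integral_mul_const, φ.integral_normed]; ring

theorem BE_conv_bound (φ : ContDiffBump (0 : Euc d)) {f : Euc d → Euc d} (hf : Continuous f)
    {x : Euc d} {c : ℝ} (hc : 0 ≤ c)
    (hb : ∀ u ∈ ball (0 : Euc d) φ.rOut, ‖f (x - u) - f x‖ ≤ c) :
    ‖BEconv φ f x - f x‖ ≤ c := by
  have Ix := BE_integrable φ hf x
  have hconst : (∫ u, φ.normed volume u • f x) = f x := by
    rw [integral_smul_const, φ.integral_normed, one_smul]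
  have Icst : Integrable (fun u => φ.normed volume u • f x) volume :=
    (φ.integrable_normed).smul_const _
  have Ixx : Integrable (fun u => φ.normed volume u • (f (x - u) - f x)) volume := by
    have := Ix.sub Icst
    simpa [smul_sub, Pi.sub_def] using this
  have hdiff : BEconv φ f x - f x = ∫ u, φ.normed volume u • (f (x - u) - f x) := by
    have h2 : (∫ u, φ.normed volume u • f (x - u)) - (∫ u, φ.normed volume u • f x)
        = ∫ u, φ.normed volume u • (f (x - u) - f x) := by
      rw [← integral_sub Ix Icst]; simp [smul_sub]
    rw [BE_conv_eq, ← h2, hconst]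
  rw [hdiff]
  calc ‖∫ u, φ.normed volume u • (f (x - u) - f x)‖
      ≤ ∫ u, ‖φ.normed volume u • (f (x - u) - f x)‖ := norm_integral_le_integral_norm _
    _ ≤ ∫ u, φ.normed volume u * c := by
        apply integral_mono Ixx.norm ((φ.integrable_normed).mul_const _)
        intro u
        show ‖φ.normed volume u • (f (x - u) - f x)‖ ≤ φ.normed volume u * c
        rw [norm_smul, Real.norm_eq_abs, abs_of_nonneg (φ.nonneg_normed u)]
        by_cases hu : u ∈ ball (0 : Euc d) φ.rOut
        · exact mul_le_mul_of_nonneg_left (hb u hu) (φ.nonneg_normed u)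
        · have hz : φ.normed volume u = 0 := by
            have hsupp := φ.support_normed_eq (μ := volume)
            by_contra hne
            exact hu (hsupp ▸ Function.mem_support.2 hne)
          simp [hz]
    _ = c := by rw [integral_mul_const, φ.integral_normed, one_mul]






theorem BE_shift_mono {f : Euc d → Euc d} {C h m : ℝ} (hh : 0 ≤ h) (hmC : m ≤ 1 - h * C)
    (hmono : ∀ x y : Euc d, ⟪x - y, f x - f y⟫ ≤ C * ‖x - y‖ ^ 2) (x y : Euc d) :
    m * ‖x - y‖ ^ 2 ≤ ⟪x - y, (x - h • f x) - (y - h • f y)⟫ := by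
  have hxy : (x - h • f x) - (y - h • f y) = (x - y) - h • (f x - f y) := by
    rw [smul_sub]; abel
  rw [hxy, inner_sub_right, real_inner_smul_right, real_inner_self_eq_norm_sq]
  have h1 := hmono x y
  nlinarith [mul_le_mul_of_nonneg_left h1 hh]


theorem BE_surj_cont {f : Euc d → Euc d} (hf : Continuous f) {C h m : ℝ} (hh : 0 < h)
    (hm : 0 < m) (hmC : m ≤ 1 - h * C)
    (hmono : ∀ x y : Euc d, ⟪x - y, f x - f y⟫ ≤ C * ‖x - y‖ ^ 2) :
    Function.Surjective (fun x : Euc d => x - h • f x) := by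
  set G : Euc d → Euc d := fun x => x - h • f x with hG
  have hGmono : ∀ x y : Euc d, m * ‖x - y‖ ^ 2 ≤ ⟪x - y, G x - G y⟫ :=
    BE_shift_mono hh.le hmC hmono
  have hGcont : Continuous G := continuous_id.sub (hf.const_smul h)
  have hclosed : IsClosed (Set.range G) := BE_closed_range hm hGcont hGmono
  intro z
  have hz : z ∈ closure (Set.range G) := by
    rw [Metric.mem_closure_iff]
    intro ε' hε'
    obtain ⟨A, hA⟩ := (isCompact_closedBall (0 : Euc d) 1).exists_bound_of_continuousOn
      hf.continuousOn
    have hA0 : 0 ≤ A := le_trans (norm_nonneg _) (hA 0 (mem_closedBall_self zero_le_one))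
    set R : ℝ := (‖z‖ + h * (3 * A)) / m with hR
    have hR0 : 0 ≤ R := by positivity
    have huc : UniformContinuousOn f (closedBall (0 : Euc d) (R + 1)) :=
      (isCompact_closedBall _ _).uniformContinuousOn_of_continuous hf.continuousOn
    rw [Metric.uniformContinuousOn_iff] at huc
    obtain ⟨δ, hδ0, hδ⟩ := huc (ε' / (2 * h)) (by positivity)
    have hmin : 0 < min δ 1 := lt_min hδ0 one_pos
    set r : ℝ := min δ 1 / 2 with hr
    have hr0 : 0 < r := half_pos hmin
    have hr1 : r ≤ 1 := by
      have : min δ 1 ≤ 1 := min_le_right _ _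
      rw [hr]; linarith
    have hrδ : r < δ := by
      have : min δ 1 ≤ δ := min_le_left _ _
      rw [hr]; linarith
    set φ : ContDiffBump (0 : Euc d) := ⟨r / 2, r, half_pos hr0, half_lt_self hr0⟩ with hφ
    have hrOut : φ.rOut = r := rfl
    set fε := BEconv φ f with hfε
    have hεcd := BE_conv_contDiff φ hf
    have hεmono := BE_conv_mono φ hf hmono
    set Gε : Euc d → Euc d := fun x => x - h • fε x with hGεdef
    have hGεmono : ∀ x y : Euc d, m * ‖x - y‖ ^ 2 ≤ ⟪x - y, Gε x - Gε y⟫ :=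
      BE_shift_mono hh.le hmC hεmono
    have hGεcd : ContDiff ℝ ((⊤ : ℕ∞) : WithTop ℕ∞) Gε :=
      contDiff_id.sub (hεcd.const_smul h)
    obtain ⟨y, hy⟩ := BE_surjective_of_contDiff hm hGεcd hGεmono z
    have hf0 : ‖fε 0 - f 0‖ ≤ 2 * A := by
      apply BE_conv_bound φ hf (by positivity)
      intro u hu
      have hu1 : ‖u‖ < r := by rwa [mem_ball_zero_iff] at hu
      have h1 : (0 : Euc d) - u ∈ closedBall (0 : Euc d) 1 := by
        rw [mem_closedBall_zero_iff]
        rw [zero_sub, norm_neg]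
        linarith
      calc ‖f (0 - u) - f 0‖ ≤ ‖f (0 - u)‖ + ‖f 0‖ := norm_sub_le _ _
        _ ≤ A + A := add_le_add (hA _ h1) (hA 0 (mem_closedBall_self zero_le_one))
        _ = 2 * A := by ring
    have hfε0 : ‖fε 0‖ ≤ 3 * A := by
      calc ‖fε 0‖ = ‖(fε 0 - f 0) + f 0‖ := by rw [sub_add_cancel]
        _ ≤ ‖fε 0 - f 0‖ + ‖f 0‖ := norm_add_le _ _
        _ ≤ 2 * A + A := add_le_add hf0 (hA 0 (mem_closedBall_self zero_le_one))
        _ = 3 * A := by ring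
    have hyb : ‖y‖ ≤ R := by
      have h1 : m * ‖y - 0‖ ≤ ‖Gε y - Gε 0‖ := BE_antilip hGεmono y 0
      have h2 : Gε y - Gε 0 = z + h • fε 0 := by
        rw [hy]; simp [hGεdef, sub_sub_eq_add_sub]
      rw [h2, sub_zero] at h1
      have h3 : ‖z + h • fε 0‖ ≤ ‖z‖ + h * (3 * A) := by
        calc ‖z + h • fε 0‖ ≤ ‖z‖ + ‖h • fε 0‖ := norm_add_le _ _
          _ = ‖z‖ + h * ‖fε 0‖ := by rw [norm_smul, Real.norm_eq_abs, abs_of_pos hh]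
          _ ≤ ‖z‖ + h * (3 * A) := by nlinarith
      have h4 : m * ‖y‖ ≤ ‖z‖ + h * (3 * A) := le_trans h1 h3
      rw [hR, le_div_iff₀ hm]
      linarith [h4]
    have hfεy : ‖fε y - f y‖ ≤ ε' / (2 * h) := by
      apply BE_conv_bound φ hf (by positivity)
      intro u hu
      have hu1 : ‖u‖ < r := by rwa [mem_ball_zero_iff] at hu
      have hyK : y ∈ closedBall (0 : Euc d) (R + 1) := by
        rw [mem_closedBall_zero_iff]; linarith
      have hyuK : y - u ∈ closedBall (0 : Euc d) (R + 1) := by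
        rw [mem_closedBall_zero_iff]
        calc ‖y - u‖ ≤ ‖y‖ + ‖u‖ := norm_sub_le _ _
          _ ≤ R + 1 := by linarith
      have hdist : dist (y - u) y < δ := by
        rw [dist_eq_norm]
        have : (y - u) - y = -u := by abel
        rw [this, norm_neg]
        linarith
      exact (hδ _ hyuK _ hyK hdist).le
    refine ⟨G y, Set.mem_range_self y, ?_⟩
    have h5 : G y - z = h • (fε y - f y) := by
      rw [← hy]
      simp only [hG, hGεdef, smul_sub]
      abel
    have h6 : dist z (G y) = h * ‖fε y - f y‖ := by
      rw [dist_eq_norm, ← norm_neg, neg_sub, h5, norm_smul, Real.norm_eq_abs, abs_of_pos hh]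
    rw [h6]
    calc h * ‖fε y - f y‖ ≤ h * (ε' / (2 * h)) :=
        mul_le_mul_of_nonneg_left hfεy hh.le
      _ = ε' / 2 := by field_simp
      _ < ε' := by linarith
  rw [hclosed.closure_eq] at hz
  exact hz


end BEAux

/-- Well-posedness of each implicit step of the backward Euler method: if `f` is
continuous and one-sided Lipschitz with constant `C`, and `hC < 1`, then for every
`z` the implicit equation `y = z + h f(y)` has a unique solution; equivalently,
`x ↦ x − h f(x)` is a bijection of `ℝ^d`. -/
theorem backward_euler_step_wellposed
    (d : ℕ) (hd : 1 ≤ d)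
    (f : EuclideanSpace ℝ (Fin d) → EuclideanSpace ℝ (Fin d))
    (hf : Continuous f) (C : ℝ)
    (hmono : ∀ x y : EuclideanSpace ℝ (Fin d), ⟪x - y, f x - f y⟫ ≤ C * ‖x - y‖ ^ 2)
    (h : ℝ) (hh : 0 < h) (hhC : h * C < 1) :
    (∀ z : EuclideanSpace ℝ (Fin d), ∃! y : EuclideanSpace ℝ (Fin d), y = z + h • f y) ∧
    Function.Bijective (fun x : EuclideanSpace ℝ (Fin d) => x - h • f x) := by
  set G : EuclideanSpace ℝ (Fin d) → EuclideanSpace ℝ (Fin d) := fun x => x - h • f x with hG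
  set m : ℝ := 1 - h * C with hmdef
  have hm : 0 < m := by rw [hmdef]; linarith
  have hGmono : ∀ x y : EuclideanSpace ℝ (Fin d), m * ‖x - y‖ ^ 2 ≤ ⟪x - y, G x - G y⟫ :=
    BE_shift_mono hh.le (le_of_eq hmdef) hmono
  have hsurj : Function.Surjective G := BE_surj_cont hf hh hm (le_of_eq hmdef) hmono
  have hinj : Function.Injective G := by
    intro a b hab
    have h1 := BE_antilip hGmono a b
    rw [hab, sub_self, norm_zero] at h1
    have h2 : ‖a - b‖ ≤ 0 := by nlinarith [norm_nonneg (a - b)]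
    have h3 : a - b = 0 := by
      have := le_antisymm h2 (norm_nonneg _)
      simpa using this
    exact sub_eq_zero.1 h3
  refine ⟨?_, hinj, hsurj⟩
  intro z
  obtain ⟨y, hy⟩ := hsurj z
  refine ⟨y, sub_eq_iff_eq_add.1 hy, ?_⟩
  intro w hw
  apply hinj
  show G w = G y
  have hw' : w - h • f w = z := sub_eq_iff_eq_add.2 hw
  rw [hG]
  simpa [hw'] using hy.symm
end
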